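/- arXiv:math/0111305 — 4 statements merged into one kernel-verified Lean document; each statement's English description precedes it below -/
import Mathlib

section
/- Let (Y_k) be the simple symmetric random walk on Z started at 0. Then for every δ₁ > 0 there is a constant c > 0 such that for all large n, P(max_{0≤k≤2n} |Y_k| ≥ n^{1/2+δ₁} | Y_{2n} = 0) ≤ 2 exp(-n^{2δ₁}). -/
open MeasureTheory ProbabilityTheory Finset
open scoped ENNReal

/-- Position of the simple random walk with increments `ψ`. -/
def rwY (ψ : ℕ → Ω → ℤ) (n : ℕ) (ω : Ω) : ℤ :=
  ∑ k ∈ Finset.range n, ψ k ω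

namespace SRW8

/-- value of step `j` determined by boolean string `b`. -/
def stepVal (m : ℕ) (b : Fin m → Bool) (j : ℕ) : ℤ :=
  if h : j < m then (if b ⟨j, h⟩ then 1 else -1) else 0

/-- partial sums -/
def ps (m : ℕ) (b : Fin m → Bool) (k : ℕ) : ℤ :=
  ∑ j ∈ Finset.range k, stepVal m b j

variable {m t k : ℕ} {b : Fin m → Bool}

lemma ps_zero : ps m b 0 = 0 := by simp [ps]

lemma ps_succ : ps m b (k + 1) = ps m b k + stepVal m b k :=
  Finset.sum_range_succ _ _

lemma stepVal_le (j : ℕ) : stepVal m b j ≤ 1 := by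
  unfold stepVal; split_ifs <;> omega

lemma neg_one_le_stepVal (j : ℕ) : -1 ≤ stepVal m b j := by
  unfold stepVal; split_ifs <;> omega

lemma ps_stable (h : m ≤ k) : ps m b k = ps m b m := by
  unfold ps
  refine (Finset.sum_subset (by intro x hx; simp only [Finset.mem_range] at *; omega) ?_).symm
  intro x _ hx
  simp only [Finset.mem_range, not_lt] at hx
  unfold stepVal
  rw [dif_neg (by omega)]

/-- discrete intermediate value -/
lemma ivt (f : ℕ → ℤ) (hstep : ∀ k, f (k + 1) ≤ f k + 1) :
    ∀ K, ∀ M : ℤ, f 0 ≤ M → M ≤ f K → ∃ k ≤ K, f k = M := by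
  intro K
  induction K with
  | zero => exact fun M h0 hK => ⟨0, le_refl 0, le_antisymm h0 hK⟩
  | succ K ih =>
    intro M h0 hK
    by_cases h : M ≤ f K
    · obtain ⟨k, hk, he⟩ := ih M h0 h
      exact ⟨k, by omega, he⟩
    · exact ⟨K + 1, le_refl _, by have := hstep K; omega⟩

def flipAfter (m t : ℕ) (b : Fin m → Bool) : Fin m → Bool :=
  fun i => if (i : ℕ) < t then b i else !(b i)

lemma stepVal_flipAfter (j : ℕ) :
    stepVal m (flipAfter m t b) j = if j < t then stepVal m b j else -stepVal m b j := by
  unfold stepVal flipAfter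
  by_cases hm : j < m
  · simp only [dif_pos hm]
    by_cases ht : j < t
    · simp [ht]
    · simp only [if_neg ht]
      cases b ⟨j, hm⟩ <;> simp
  · simp [hm]

lemma flipAfter_flipAfter : flipAfter m t (flipAfter m t b) = b := by
  funext i
  unfold flipAfter
  split_ifs <;> simp

lemma ps_flipAfter_le (hk : k ≤ t) : ps m (flipAfter m t b) k = ps m b k := by
  unfold ps
  refine Finset.sum_congr rfl fun j hj => ?_
  rw [stepVal_flipAfter, if_pos]
  simp only [Finset.mem_range] at hj; omega

lemma ps_flipAfter_ge (ht : t ≤ k) : ps m (flipAfter m t b) k = 2 * ps m b t - ps m b k := by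
  induction k, ht using Nat.le_induction with
  | base => rw [ps_flipAfter_le (le_refl t)]; ring
  | succ k hk ih =>
    rw [ps_succ, ps_succ, ih, stepVal_flipAfter, if_neg (by omega)]
    ring

section Reflection

variable (m : ℕ) (M : ℤ)

open scoped Classical in
/-- reflection of the path after the first time it hits level `M`. -/
noncomputable def reflMap (b : Fin m → Bool) : Fin m → Bool :=
  if hb : ∃ k, ps m b k = M then flipAfter m (Nat.find hb) b else b

variable {m M}

lemma reflMap_of_hit {b : Fin m → Bool} (hb : ∃ k, ps m b k = M) :
    reflMap m M b = flipAfter m (Nat.find hb) b := by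
  rw [reflMap, dif_pos hb]

lemma find_le_m {b : Fin m → Bool} (hb : ∃ k ≤ m, ps m b k = M) 
    (hb' : ∃ k, ps m b k = M) : Nat.find hb' ≤ m := by
  obtain ⟨k, hk, he⟩ := hb
  exact le_trans (Nat.find_min' hb' he) hk

lemma reflMap_end {b : Fin m → Bool} (hb : ∃ k ≤ m, ps m b k = M)
    (h0 : ps m b m = 0) : ps m (reflMap m M b) m = 2 * M := by
  have hb' : ∃ k, ps m b k = M := ⟨hb.choose, hb.choose_spec.2⟩
  rw [reflMap_of_hit hb', ps_flipAfter_ge (find_le_m hb hb'), Nat.find_spec hb', h0]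
  ring

lemma reflMap_hit {b : Fin m → Bool} (hb' : ∃ k, ps m b k = M) :
    ∃ k, ps m (reflMap m M b) k = M := by
  refine ⟨Nat.find hb', ?_⟩
  rw [reflMap_of_hit hb', ps_flipAfter_le (le_refl _)]
  exact Nat.find_spec hb'

lemma reflMap_reflMap {b : Fin m → Bool} (hb' : ∃ k, ps m b k = M) :
    reflMap m M (reflMap m M b) = b := by
  have hb'' : ∃ k, ps m (reflMap m M b) k = M := reflMap_hit hb'
  rw [reflMap_of_hit hb'']
  have key : ∀ j, j ≤ Nat.find hb' → ps m (reflMap m M b) j = ps m b j := by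
    intro j hj
    rw [reflMap_of_hit hb']
    exact ps_flipAfter_le hj
  have hfind : Nat.find hb'' = Nat.find hb' := by
    apply le_antisymm
    · exact Nat.find_min' hb'' ((key _ (le_refl _)).trans (Nat.find_spec hb'))
    · by_contra h
      push_neg at h
      exact Nat.find_min hb' h ((key _ (le_of_lt h)).symm.trans (Nat.find_spec hb''))
  rw [hfind, reflMap_of_hit hb', flipAfter_flipAfter]

/-- reflection: paths that hit `M` and end at `0` are at most as many as paths ending at `2M`. -/
lemma card_hit_end_le (m : ℕ) (M : ℤ) :
    (Finset.univ.filter fun b : Fin m → Bool =>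
        (∃ k ≤ m, ps m b k = M) ∧ ps m b m = 0).card ≤
      (Finset.univ.filter fun b : Fin m → Bool => ps m b m = 2 * M).card := by
  classical
  apply Finset.card_le_card_of_injOn (reflMap m M)
  · intro b hb
    simp only [Finset.coe_filter, Set.mem_setOf_eq, Finset.mem_filter, Finset.mem_univ, true_and] at hb ⊢
    exact reflMap_end hb.1 hb.2
  · intro b hb b' hb' he
    simp only [Finset.coe_filter, Set.mem_setOf_eq, Finset.mem_univ, true_and] at hb hb'
    have h1 : ∃ k, ps m b k = M := by
      obtain ⟨⟨k, _, he⟩, -⟩ := hb; exact ⟨k, he⟩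
    have h2 : ∃ k, ps m b' k = M := by
      obtain ⟨⟨k, _, he⟩, -⟩ := hb'; exact ⟨k, he⟩
    rw [← reflMap_reflMap h1, ← reflMap_reflMap h2, he]

end Reflection

section Counting

variable {m : ℕ}

lemma ps_neg (b : Fin m → Bool) (k : ℕ) : ps m (flipAfter m 0 b) k = - ps m b k := by
  rw [ps_flipAfter_ge (Nat.zero_le k), ps_zero]; ring

lemma card_hitneg_end_le (m : ℕ) (M : ℤ) :
    (Finset.univ.filter fun b : Fin m → Bool =>
        (∃ k ≤ m, ps m b k = -M) ∧ ps m b m = 0).card ≤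
      (Finset.univ.filter fun b : Fin m → Bool =>
        (∃ k ≤ m, ps m b k = M) ∧ ps m b m = 0).card := by
  classical
  apply Finset.card_le_card_of_injOn (fun b => flipAfter m 0 b)
  · intro b hb
    simp only [Finset.coe_filter, Set.mem_setOf_eq, Finset.mem_filter,
      Finset.mem_univ, true_and] at hb ⊢
    obtain ⟨⟨k, hk, he⟩, h0⟩ := hb
    refine ⟨⟨k, hk, ?_⟩, ?_⟩
    · rw [ps_neg, he]; ring
    · rw [ps_neg, h0]; ring
  · intro b _ b' _ he
    have := congrArg (flipAfter m 0) he
    rwa [flipAfter_flipAfter, flipAfter_flipAfter] at this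

lemma ps_total (b : Fin m → Bool) :
    ps m b m = 2 * ((Finset.univ.filter fun i => b i = true).card : ℤ) - m := by
  classical
  have h1 : ps m b m = ∑ i : Fin m, (if b i then (1 : ℤ) else -1) := by
    unfold ps
    rw [← Fin.sum_univ_eq_sum_range (fun j => stepVal m b j) m]
    refine Finset.sum_congr rfl fun i _ => ?_
    unfold stepVal
    rw [dif_pos i.isLt]
  rw [h1, Finset.sum_ite, Finset.sum_const, Finset.sum_const]
  have hcard : (Finset.univ.filter fun i => ¬ b i = true).card
      = m - (Finset.univ.filter fun i => b i = true).card := by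
    rw [Finset.filter_not, Finset.card_sdiff_of_subset (Finset.filter_subset _ _)]
    simp
  have hle : (Finset.univ.filter fun i => b i = true).card ≤ m := by
    simpa using Finset.card_filter_le Finset.univ (fun i => b i = true)
  rw [hcard]
  simp only [nsmul_eq_mul, mul_one, mul_neg_one, smul_neg, smul_eq_mul]
  omega

lemma card_count (m t : ℕ) :
    (Finset.univ.filter fun b : Fin m → Bool =>
      (Finset.univ.filter fun i => b i = true).card = t).card = m.choose t := by
  classical
  have h2 : (Finset.powersetCard t (Finset.univ : Finset (Fin m))).card = m.choose t := by
    rw [Finset.card_powersetCard]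
    simp
  rw [← h2]
  apply Finset.card_bij (fun b _ => Finset.univ.filter fun i => b i = true)
  · intro b hb
    simp only [Finset.mem_filter, Finset.mem_univ, true_and] at hb
    rw [Finset.mem_powersetCard]
    exact ⟨Finset.subset_univ _, hb⟩
  · intro b₁ h₁ b₂ h₂ he
    funext i
    have : (i ∈ Finset.univ.filter fun j => b₁ j = true) ↔
        (i ∈ Finset.univ.filter fun j => b₂ j = true) := by rw [he]
    simp only [Finset.mem_filter, Finset.mem_univ, true_and] at this
    cases hb1 : b₁ i <;> cases hb2 : b₂ i <;> simp_all
  · intro s hs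
    rw [Finset.mem_powersetCard] at hs
    refine ⟨fun i => decide (i ∈ s), ?_, ?_⟩
    · simp only [Finset.mem_filter, Finset.mem_univ, true_and]
      rw [← hs.2]
      congr 1
      ext i
      simp
    · ext i
      simp

lemma card_end (m : ℕ) (z : ℤ) (t : ℕ) (hz : 2 * (t : ℤ) - m = z) :
    (Finset.univ.filter fun b : Fin m → Bool => ps m b m = z).card = m.choose t := by
  classical
  rw [← card_count m t]
  congr 1
  apply Finset.filter_congr
  intro b _
  rw [ps_total, ← hz]
  constructor
  · intro h; exact_mod_cast by omega
  · intro h; rw [h]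

end Counting
lemma aux_num (a N s : ℝ) (ha : 10 ≤ a) (hN : 2 ≤ N) (h1 : a*N ≤ s) :
    a ≤ 2*s/(2*N+1) + 2/3/(2*N+1)^3*s^2 := by
  have hT : (0:ℝ) < 2*N+1 := by linarith
  rw [← sub_nonneg]
  have expand : 2*s/(2*N+1) + 2/3/(2*N+1)^3*s^2 - a
      = (2*s*(2*N+1)^2 + 2/3*s^2 - a*(2*N+1)^3)/(2*N+1)^3 := by
    field_simp
  rw [expand]
  apply div_nonneg _ (by positivity)
  have h2 : (a*N)^2 ≤ s^2 := by
    apply pow_le_pow_left₀ (by positivity) h1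
  nlinarith [mul_le_mul_of_nonneg_right h1 (sq_nonneg (2*N+1)), h2,
    mul_nonneg (mul_nonneg (by linarith : (0:ℝ) ≤ a) (by linarith : (0:ℝ) ≤ N)) (by linarith : (0:ℝ) ≤ N),
    sq_nonneg (N-2), mul_pos (by linarith : (0:ℝ) < a) (by linarith : (0:ℝ) < N)]

lemma log_lb {d : ℝ} (h0 : 0 ≤ d) (h1 : d < 1) :
    2*d + 2/3*d^3 ≤ Real.log (1+d) - Real.log (1-d) := by
  set f : ℝ → ℝ := fun y => Real.log (1+y) - Real.log (1-y) - (2*y + 2/3*y^3) with hf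
  have hder : ∀ x ∈ Set.Icc (0:ℝ) d, HasDerivAt f
      (1/(1+x) - (1/(1-x))*(-1) - (2 + 2/3*(3*x^2))) x := by
    intro x hx
    obtain ⟨hx0, hxd⟩ := hx
    have hp1 : (0:ℝ) < 1 + x := by linarith
    have hp2 : (0:ℝ) < 1 - x := by linarith
    have d1 : HasDerivAt (fun y : ℝ => Real.log (1+y)) (1/(1+x)) x := by
      have : HasDerivAt (fun y : ℝ => 1+y) 1 x := (hasDerivAt_id x).const_add 1
      simpa [Function.comp_def] using (Real.hasDerivAt_log hp1.ne').comp x this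
    have d2 : HasDerivAt (fun y : ℝ => Real.log (1-y)) ((1/(1-x))*(-1)) x := by
      have h' : HasDerivAt (fun y : ℝ => 1-y) (-1) x := by
        exact (hasDerivAt_id' x).const_sub 1
      have := (Real.hasDerivAt_log hp2.ne').comp x h'
      simpa [Function.comp_def, one_div] using this
    have d3 : HasDerivAt (fun y : ℝ => 2*y + 2/3*y^3) (2 + 2/3*(3*x^2)) x := by
      have p1 : HasDerivAt (fun y : ℝ => 2*y) 2 x := by
        simpa using (hasDerivAt_id x).const_mul (2:ℝ)
      have p2 : HasDerivAt (fun y : ℝ => 2/3*y^3) (2/3*(3*x^2)) x := by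
        have := hasDerivAt_pow 3 x
        simpa using this.const_mul (2/3 : ℝ)
      exact p1.add p2
    exact (d1.sub d2).sub d3
  have hmono : MonotoneOn f (Set.Icc 0 d) := by
    apply monotoneOn_of_deriv_nonneg (convex_Icc 0 d)
    · intro x hx
      exact (hder x hx).continuousAt.continuousWithinAt
    · intro x hx
      rw [interior_Icc] at hx
      exact (hder x (Set.mem_Icc_of_Ioo hx)).differentiableAt.differentiableWithinAt
    · intro x hx
      rw [interior_Icc] at hx
      rw [(hder x (Set.mem_Icc_of_Ioo hx)).deriv]
      obtain ⟨hx0, hxd⟩ := hx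
      have hp1 : (0:ℝ) < 1 + x := by linarith
      have hp2 : (0:ℝ) < 1 - x := by linarith
      have key : 1/(1+x) - (1/(1-x))*(-1) - (2 + 2/3*(3*x^2))
          = 2*x^4 / ((1+x)*(1-x)) := by
        field_simp
        ring
      rw [key]
      positivity
  have h0' : f 0 = 0 := by simp [hf]
  have := hmono (Set.left_mem_Icc.mpr h0) (Set.right_mem_Icc.mpr h0) h0
  rw [h0'] at this
  simp only [hf] at this
  linarith

lemma prod_identity (n : ℕ) : ∀ M ≤ n,
    (((2*n).choose (n+M) : ℝ)) * ∏ j ∈ Finset.range M, (((n:ℝ)+j+1)/((n:ℝ)-j))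
      = ((2*n).choose n : ℝ) := by
  intro M
  induction M with
  | zero => simp
  | succ M ih =>
    intro hM
    have hM' : M ≤ n := by omega
    have hMn : M < n := by omega
    rw [Finset.prod_range_succ, ← mul_assoc]
    have hnat : (2*n).choose (n+M+1) * (n+M+1) = (2*n).choose (n+M) * (n - M) := by
      have := Nat.choose_succ_right_eq (2*n) (n+M)
      have h2 : 2*n - (n+M) = n - M := by omega
      rw [h2] at this
      simpa [Nat.add_assoc] using this
    have hcast : ((2*n).choose (n+M+1) : ℝ) * ((n:ℝ)+M+1) = ((2*n).choose (n+M) : ℝ) * ((n:ℝ)-M) := by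
      have h3 := congrArg (fun x : ℕ => (x:ℝ)) hnat
      push_cast [hM'] at h3
      linear_combination h3
    have hden : (n:ℝ) - M > 0 := by
      have : (M:ℝ) < n := by exact_mod_cast hMn
      linarith
    have hstep : ((2*n).choose (n+(M+1)) : ℝ) * (((n:ℝ)+M+1)/((n:ℝ)-M))
        = ((2*n).choose (n+M) : ℝ) := by
      rw [show n+(M+1) = n+M+1 by omega]
      rw [← mul_div_assoc, div_eq_iff hden.ne', hcast]
    calc ((2*n).choose (n+(M+1)) : ℝ) * (∏ j ∈ Finset.range M, (((n:ℝ)+j+1)/((n:ℝ)-j)))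
          * (((n:ℝ)+M+1)/((n:ℝ)-M))
        = (((2*n).choose (n+(M+1)) : ℝ) * (((n:ℝ)+M+1)/((n:ℝ)-M)))
          * ∏ j ∈ Finset.range M, (((n:ℝ)+j+1)/((n:ℝ)-j)) := by ring
      _ = ((2*n).choose (n+M) : ℝ) * ∏ j ∈ Finset.range M, (((n:ℝ)+j+1)/((n:ℝ)-j)) := by
          rw [hstep]
      _ = ((2*n).choose n : ℝ) := ih hM'

lemma sum_odd_sq (M : ℕ) : ∑ j ∈ Finset.range M, (2*(j:ℝ)+1) = (M:ℝ)^2 := by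
  induction M with
  | zero => simp
  | succ M ih => rw [Finset.sum_range_succ, ih]; push_cast; ring

lemma sum_odd_cubes (M : ℕ) : (M:ℝ)^4 ≤ ∑ j ∈ Finset.range M, (2*(j:ℝ)+1)^3 := by
  induction M with
  | zero => simp
  | succ M ih =>
    rw [Finset.sum_range_succ]
    push_cast
    nlinarith [ih, sq_nonneg ((M:ℝ)), (by positivity : (0:ℝ) ≤ (M:ℝ))]

lemma key_binom (n Mn : ℕ) (a : ℝ) (hn : 2 ≤ n) (ha : 10 ≤ a)
    (hM : a * n ≤ (Mn:ℝ)^2) :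
    Real.exp a * ((2*n).choose (n + Mn) : ℝ) ≤ ((2*n).choose n : ℝ) := by
  by_cases hMn : Mn ≤ n
  · -- main case
    have hident := prod_identity n Mn hMn
    have hprod : Real.exp a ≤ ∏ j ∈ Finset.range Mn, (((n:ℝ)+j+1)/((n:ℝ)-j)) := by
      have hfac : ∀ j ∈ Finset.range Mn,
          Real.exp (2*((2*(j:ℝ)+1)/(2*(n:ℝ)+1)) + 2/3*((2*(j:ℝ)+1)/(2*(n:ℝ)+1))^3)
            ≤ (((n:ℝ)+j+1)/((n:ℝ)-j)) := by
        intro j hj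
        rw [Finset.mem_range] at hj
        have hjn : (j:ℝ) < n := by
          have : j < n := by omega
          exact_mod_cast this
        set d : ℝ := (2*(j:ℝ)+1)/(2*(n:ℝ)+1) with hd
        have hnpos : (0:ℝ) < 2*(n:ℝ)+1 := by positivity
        have hd0 : 0 ≤ d := by positivity
        have hd1 : d < 1 := by
          rw [hd, div_lt_one hnpos]
          linarith
        have hlog := log_lb hd0 hd1
        have hp1 : (0:ℝ) < 1 + d := by linarith
        have hp2 : (0:ℝ) < 1 - d := by linarith
        have hratio : (1+d)/(1-d) = ((n:ℝ)+j+1)/((n:ℝ)-j) := by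
          rw [hd]
          rw [div_eq_div_iff (by linarith) (by linarith)]
          field_simp
          ring
        calc Real.exp (2*d + 2/3*d^3) ≤ Real.exp (Real.log (1+d) - Real.log (1-d)) :=
              Real.exp_le_exp.mpr hlog
          _ = (1+d)/(1-d) := by
              rw [← Real.log_div hp1.ne' hp2.ne', Real.exp_log (by positivity)]
          _ = ((n:ℝ)+j+1)/((n:ℝ)-j) := hratio
      calc Real.exp a
          ≤ Real.exp (∑ j ∈ Finset.range Mn,
              (2*((2*(j:ℝ)+1)/(2*(n:ℝ)+1)) + 2/3*((2*(j:ℝ)+1)/(2*(n:ℝ)+1))^3)) := by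
            apply Real.exp_le_exp.mpr
            have hnpos : (0:ℝ) < 2*(n:ℝ)+1 := by positivity
            have e1 : ∑ j ∈ Finset.range Mn, 2*((2*(j:ℝ)+1)/(2*(n:ℝ)+1))
                = 2*(Mn:ℝ)^2/(2*(n:ℝ)+1) := by
              have hc : ∀ j ∈ Finset.range Mn, 2*((2*(j:ℝ)+1)/(2*(n:ℝ)+1))
                  = (2/(2*(n:ℝ)+1)) * (2*(j:ℝ)+1) := by
                intro j _; ring
              rw [Finset.sum_congr rfl hc, ← Finset.mul_sum, sum_odd_sq]
              ring
            have e2 : (2/3/(2*(n:ℝ)+1)^3) * (Mn:ℝ)^4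
                ≤ ∑ j ∈ Finset.range Mn, 2/3*((2*(j:ℝ)+1)/(2*(n:ℝ)+1))^3 := by
              have hc : ∀ j ∈ Finset.range Mn, 2/3*((2*(j:ℝ)+1)/(2*(n:ℝ)+1))^3
                  = (2/3/(2*(n:ℝ)+1)^3) * (2*(j:ℝ)+1)^3 := by
                intro j _; rw [div_pow]; ring
              rw [Finset.sum_congr rfl hc, ← Finset.mul_sum]
              have := sum_odd_cubes Mn
              apply mul_le_mul_of_nonneg_left this (by positivity)
            rw [Finset.sum_add_distrib, e1]
            have hN2 : (2:ℝ) ≤ (n:ℝ) := by exact_mod_cast hn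
            have hstep : a ≤ 2*(Mn:ℝ)^2/(2*(n:ℝ)+1) + (2/3/(2*(n:ℝ)+1)^3) * (Mn:ℝ)^4 := by
              have := aux_num a (n:ℝ) ((Mn:ℝ)^2) ha hN2 hM
              calc a ≤ 2*((Mn:ℝ)^2)/(2*(n:ℝ)+1) + 2/3/(2*(n:ℝ)+1)^3*((Mn:ℝ)^2)^2 := this
                _ = 2*(Mn:ℝ)^2/(2*(n:ℝ)+1) + (2/3/(2*(n:ℝ)+1)^3) * (Mn:ℝ)^4 := by ring
            calc a ≤ 2*(Mn:ℝ)^2/(2*(n:ℝ)+1) + (2/3/(2*(n:ℝ)+1)^3) * (Mn:ℝ)^4 := hstep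
              _ ≤ _ := by
                apply add_le_add_right e2
          _ = ∏ j ∈ Finset.range Mn, Real.exp
              (2*((2*(j:ℝ)+1)/(2*(n:ℝ)+1)) + 2/3*((2*(j:ℝ)+1)/(2*(n:ℝ)+1))^3) :=
            Real.exp_sum _ _
          _ ≤ ∏ j ∈ Finset.range Mn, (((n:ℝ)+j+1)/((n:ℝ)-j)) := by
            apply Finset.prod_le_prod
            · intro j _; positivity
            · exact hfac
    calc Real.exp a * ((2*n).choose (n + Mn) : ℝ)
        ≤ (∏ j ∈ Finset.range Mn, (((n:ℝ)+j+1)/((n:ℝ)-j))) * ((2*n).choose (n + Mn) : ℝ) := by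
          apply mul_le_mul_of_nonneg_right hprod (by positivity)
      _ = ((2*n).choose n : ℝ) := by rw [mul_comm]; exact hident
  · -- Mn > n : choose = 0
    rw [Nat.choose_eq_zero_of_lt (by omega)]
    simp only [Nat.cast_zero, mul_zero]
    positivity


section MeasureSide

variable {Ω : Type*} [MeasurableSpace Ω] {μ : Measure Ω} [IsProbabilityMeasure μ]
  {ψ : ℕ → Ω → ℤ} {m : ℕ}

/-- cylinder event -/
def cyl (ψ : ℕ → Ω → ℤ) (m : ℕ) (b : Fin m → Bool) : Set Ω :=
  ⋂ j ∈ Finset.range m, {ω | ψ j ω = stepVal m b j}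

lemma measurableSet_cyl (hmeas : ∀ n, Measurable (ψ n)) (b : Fin m → Bool) :
    MeasurableSet (cyl ψ m b) := by
  apply MeasurableSet.biInter (Finset.range m).countable_toSet
  intro j _
  exact (hmeas j) (measurableSet_singleton _)

lemma meas_cyl (hindep : iIndepFun ψ μ)
    (h1 : ∀ n, μ {ω | ψ n ω = 1} = 1/2) (h2 : ∀ n, μ {ω | ψ n ω = -1} = 1/2)
    (b : Fin m → Bool) : μ (cyl ψ m b) = (1/2 : ℝ≥0∞)^m := by
  have hbi := hindep.meas_biInter (S := Finset.range m)
    (s := fun j => {ω | ψ j ω = stepVal m b j})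
    (fun j _ => ⟨{stepVal m b j}, measurableSet_singleton _, rfl⟩)
  rw [cyl, hbi]
  have he : ∀ j ∈ Finset.range m, μ {ω | ψ j ω = stepVal m b j} = 1/2 := by
    intro j hj
    rw [Finset.mem_range] at hj
    unfold stepVal
    rw [dif_pos hj]
    cases hb : b ⟨j, hj⟩
    · simpa using h2 j
    · simpa using h1 j
  rw [Finset.prod_congr rfl he, Finset.prod_const, Finset.card_range]

lemma cyl_disjoint {b b' : Fin m → Bool} (hne : b ≠ b') :
    Disjoint (cyl ψ m b) (cyl ψ m b') := by
  rw [Set.disjoint_left]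
  intro ω h h'
  have hex : ∃ i : Fin m, b i ≠ b' i := by
    by_contra hc
    push_neg at hc
    exact hne (funext hc)
  obtain ⟨i, hi⟩ := hex
  have e1 : ψ i ω = stepVal m b i := Set.mem_iInter₂.1 h i (Finset.mem_range.mpr i.isLt)
  have e2 : ψ i ω = stepVal m b' i := Set.mem_iInter₂.1 h' i (Finset.mem_range.mpr i.isLt)
  have he : stepVal m b i = stepVal m b' i := e1.symm.trans e2
  unfold stepVal at he
  rw [dif_pos i.isLt, dif_pos i.isLt] at he
  have hii : (⟨(i:ℕ), i.isLt⟩ : Fin m) = i := by simp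
  rw [hii] at he
  cases hb : b i <;> cases hb' : b' i <;> simp_all

lemma rwY_eq_ps {ω : Ω} {b : Fin m → Bool} (hω : ω ∈ cyl ψ m b) {k : ℕ} (hk : k ≤ m) :
    rwY ψ k ω = ps m b k := by
  unfold rwY ps
  refine Finset.sum_congr rfl fun j hj => ?_
  rw [Finset.mem_range] at hj
  exact Set.mem_iInter₂.1 hω j (Finset.mem_range.mpr (by omega))

/-- all increments up to `m` are `±1` -/
def good (ψ : ℕ → Ω → ℤ) (m : ℕ) : Set Ω := {ω | ∀ j < m, ψ j ω = 1 ∨ ψ j ω = -1}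

lemma meas_good_compl (hmeas : ∀ n, Measurable (ψ n))
    (h1 : ∀ n, μ {ω | ψ n ω = 1} = 1/2) (h2 : ∀ n, μ {ω | ψ n ω = -1} = 1/2) :
    μ (good ψ m)ᶜ = 0 := by
  have hsub : (good ψ m)ᶜ ⊆ ⋃ j ∈ Finset.range m, ({ω | ψ j ω = 1} ∪ {ω | ψ j ω = -1})ᶜ := by
    intro ω hω
    simp only [good, Set.mem_compl_iff, Set.mem_setOf_eq, not_forall] at hω
    obtain ⟨j, hj, hne⟩ := hω
    refine Set.mem_biUnion (Finset.mem_coe.mpr (Finset.mem_range.mpr hj)) ?_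
    simp only [Set.mem_compl_iff, Set.mem_union, Set.mem_setOf_eq]
    tauto
  apply measure_mono_null hsub
  apply le_antisymm _ zero_le
  refine le_trans (measure_biUnion_finset_le _ _) (le_of_eq (Finset.sum_eq_zero ?_))
  intro j _
  have hmu : MeasurableSet {ω | ψ j ω = (1:ℤ)} := (hmeas j) (measurableSet_singleton _)
  have hmn : MeasurableSet {ω | ψ j ω = (-1:ℤ)} := (hmeas j) (measurableSet_singleton _)
  have hdisj : Disjoint {ω | ψ j ω = (1:ℤ)} {ω | ψ j ω = (-1:ℤ)} := by
    rw [Set.disjoint_left]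
    intro ω ha hb
    simp only [Set.mem_setOf_eq] at ha hb
    rw [ha] at hb
    norm_num at hb
  have hu : μ ({ω | ψ j ω = (1:ℤ)} ∪ {ω | ψ j ω = (-1:ℤ)}) = 1 := by
    rw [measure_union hdisj hmn, h1 j, h2 j]
    rw [ENNReal.div_add_div_same, one_add_one_eq_two, ENNReal.div_self (by norm_num) (by norm_num)]
  rw [prob_compl_eq_one_sub (hmu.union hmn), hu, tsub_self]

/-- boolean encoding of an outcome -/
def bOf (ψ : ℕ → Ω → ℤ) (m : ℕ) (ω : Ω) : Fin m → Bool := fun i => decide (ψ i ω = 1)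

lemma mem_cyl_bOf {ω : Ω} (hω : ω ∈ good ψ m) : ω ∈ cyl ψ m (bOf ψ m ω) := by
  apply Set.mem_iInter₂.2
  intro j hj
  rw [Finset.mem_range] at hj
  show ψ j ω = stepVal m (bOf ψ m ω) j
  unfold stepVal bOf
  rw [dif_pos hj]
  rcases hω j hj with h | h
  · simp [h]
  · simp [h]

end MeasureSide

end SRW8

/-- conditionally on `{Y_{2n} = 0}`, the probability that the walk exits
`[-n^{1/2+δ₁}, n^{1/2+δ₁}]` before time `2n` is at most `2 e^{-n^{2δ₁}}` for large `n`. -/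
theorem max_excursion_conditional_bound
    {Ω : Type*} [MeasurableSpace Ω] (μ : Measure Ω) [IsProbabilityMeasure μ]
    (ψ : ℕ → Ω → ℤ) (hmeas : ∀ n, Measurable (ψ n))
    (hindep : iIndepFun ψ μ)
    (h1 : ∀ n, μ {ω | ψ n ω = 1} = 1/2) (h2 : ∀ n, μ {ω | ψ n ω = -1} = 1/2) :
    ∀ δ₁ : ℝ, 0 < δ₁ → ∃ N : ℕ, ∀ n ≥ N,
      μ ({ω | ∃ k ≤ 2*n, ((n : ℝ) ^ ((1 : ℝ)/2 + δ₁)) ≤ (|rwY ψ k ω| : ℝ)}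
          ∩ {ω | rwY ψ (2*n) ω = 0})
        ≤ ENNReal.ofReal (2 * Real.exp (-(n : ℝ) ^ (2 * δ₁)))
            * μ {ω | rwY ψ (2*n) ω = 0} := by
  intro δ₁ hδ
  refine ⟨max 2 (⌈(10:ℝ) ^ ((1:ℝ)/(2*δ₁))⌉₊ + 1), ?_⟩
  intro n hn
  have hn2 : 2 ≤ n := le_trans (le_max_left _ _) hn
  have hnR : (0:ℝ) < (n:ℝ) := by
    have : (0:ℕ) < n := by omega
    exact_mod_cast this
  set x : ℝ := (n:ℝ) ^ ((1:ℝ)/2 + δ₁) with hx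
  have hx0 : 0 < x := Real.rpow_pos_of_pos hnR _
  set a : ℝ := (n:ℝ) ^ (2*δ₁) with ha
  have hδ2 : 0 < 2*δ₁ := by linarith
  -- a ≥ 10
  have ha10 : (10:ℝ) ≤ a := by
    have hcn : (10:ℝ) ^ ((1:ℝ)/(2*δ₁)) ≤ (n:ℝ) := by
      have h1' : ⌈(10:ℝ) ^ ((1:ℝ)/(2*δ₁))⌉₊ ≤ n := by
        have := le_trans (le_max_right 2 (⌈(10:ℝ) ^ ((1:ℝ)/(2*δ₁))⌉₊ + 1)) hn
        omega
      exact le_trans (Nat.le_ceil _) (by exact_mod_cast h1')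
    have h10 : ((10:ℝ) ^ ((1:ℝ)/(2*δ₁))) ^ (2*δ₁) = 10 := by
      rw [← Real.rpow_mul (by norm_num : (0:ℝ) ≤ 10), one_div,
        inv_mul_cancel₀ hδ2.ne', Real.rpow_one]
    have hmono := Real.rpow_le_rpow (by positivity) hcn hδ2.le
    rw [h10] at hmono
    exact hmono
  -- integer threshold
  set Mn : ℕ := ⌈x⌉₊ with hMn
  have hMx : x ≤ (Mn:ℝ) := Nat.le_ceil x
  have haM : a * n ≤ (Mn:ℝ)^2 := by
    have hxx : x^2 = a * n := by
      rw [hx, ha, sq, ← Real.rpow_add hnR,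
        show (1:ℝ)/2 + δ₁ + ((1:ℝ)/2 + δ₁) = 1 + 2*δ₁ by ring,
        Real.rpow_add hnR, Real.rpow_one]
      ring
    nlinarith [hMx, hx0]
  have hthresh : ∀ z : ℤ, x ≤ |(z : ℝ)| → (Mn:ℤ) ≤ |z| := by
    intro z hz
    rw [← Int.cast_abs] at hz
    have hceil : ⌈x⌉ ≤ |z| := Int.ceil_le.mpr hz
    rw [hMn, Int.natCast_ceil_eq_ceil hx0.le]
    exact hceil
  -- the path-space sets
  set S : Finset (Fin (2*n) → Bool) := Finset.univ.filter
    (fun b => (∃ k ≤ 2*n, (Mn:ℤ) ≤ |SRW8.ps (2*n) b k|) ∧ SRW8.ps (2*n) b (2*n) = 0)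
    with hSdef
  have hcylP : ∀ b : Fin (2*n) → Bool, μ (SRW8.cyl ψ (2*n) b) = (1/2 : ℝ≥0∞)^(2*n) :=
    fun b => SRW8.meas_cyl hindep h1 h2 b
  -- upper bound for μ (A ∩ B)
  have hup : μ ({ω | ∃ k ≤ 2*n, x ≤ (|rwY ψ k ω| : ℝ)} ∩ {ω | rwY ψ (2*n) ω = 0})
      ≤ (S.card : ℝ≥0∞) * (1/2 : ℝ≥0∞)^(2*n) := by
    have hincl : {ω | ∃ k ≤ 2*n, x ≤ (|rwY ψ k ω| : ℝ)} ∩ {ω | rwY ψ (2*n) ω = 0}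
        ⊆ (⋃ b ∈ S, SRW8.cyl ψ (2*n) b) ∪ (SRW8.good ψ (2*n))ᶜ := by
      rintro ω ⟨hAω, hBω⟩
      by_cases hg : ω ∈ SRW8.good ψ (2*n)
      · left
        have hcy := SRW8.mem_cyl_bOf (m := 2*n) hg
        have hmem : SRW8.bOf ψ (2*n) ω ∈ S := by
          rw [hSdef, Finset.mem_filter]
          refine ⟨Finset.mem_univ _, ?_, ?_⟩
          · obtain ⟨k, hk, hxk⟩ := hAω
            refine ⟨k, hk, ?_⟩
            have hth := hthresh _ hxk
            rwa [SRW8.rwY_eq_ps hcy hk] at hth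
          · have hBω' : rwY ψ (2*n) ω = 0 := hBω
            rwa [SRW8.rwY_eq_ps hcy (le_refl (2*n))] at hBω'
        exact Set.mem_iUnion₂.2 ⟨_, hmem, hcy⟩
      · right; exact hg
    calc μ ({ω | ∃ k ≤ 2*n, x ≤ (|rwY ψ k ω| : ℝ)} ∩ {ω | rwY ψ (2*n) ω = 0})
        ≤ μ ((⋃ b ∈ S, SRW8.cyl ψ (2*n) b) ∪ (SRW8.good ψ (2*n))ᶜ) := measure_mono hincl
      _ ≤ μ (⋃ b ∈ S, SRW8.cyl ψ (2*n) b) + μ (SRW8.good ψ (2*n))ᶜ := measure_union_le _ _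
      _ = μ (⋃ b ∈ S, SRW8.cyl ψ (2*n) b) := by
          rw [SRW8.meas_good_compl hmeas h1 h2, add_zero]
      _ ≤ ∑ b ∈ S, μ (SRW8.cyl ψ (2*n) b) := measure_biUnion_finset_le _ _
      _ = (S.card : ℝ≥0∞) * (1/2 : ℝ≥0∞)^(2*n) := by
          rw [Finset.sum_congr rfl (fun b _ => hcylP b), Finset.sum_const, nsmul_eq_mul]
  -- lower bound for μ B
  set SB : Finset (Fin (2*n) → Bool) :=
    Finset.univ.filter (fun b => SRW8.ps (2*n) b (2*n) = 0) with hSB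
  have hlow : (((2*n).choose n : ℕ) : ℝ≥0∞) * (1/2 : ℝ≥0∞)^(2*n)
      ≤ μ {ω | rwY ψ (2*n) ω = 0} := by
    have hcardSB : SB.card = (2*n).choose n :=
      SRW8.card_end (2*n) 0 n (by push_cast; ring)
    have hdisj : (SB : Set (Fin (2*n) → Bool)).PairwiseDisjoint (SRW8.cyl ψ (2*n)) :=
      fun b _ b' _ hne => SRW8.cyl_disjoint hne
    have hsub : (⋃ b ∈ SB, SRW8.cyl ψ (2*n) b) ⊆ {ω | rwY ψ (2*n) ω = 0} := by
      intro ω hω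
      obtain ⟨b, hbS, hbω⟩ := Set.mem_iUnion₂.1 hω
      rw [hSB, Finset.mem_filter] at hbS
      show rwY ψ (2*n) ω = 0
      rw [SRW8.rwY_eq_ps hbω (le_refl (2*n))]
      exact hbS.2
    calc (((2*n).choose n : ℕ) : ℝ≥0∞) * (1/2 : ℝ≥0∞)^(2*n)
        = ∑ b ∈ SB, μ (SRW8.cyl ψ (2*n) b) := by
          rw [Finset.sum_congr rfl (fun b _ => hcylP b), Finset.sum_const, nsmul_eq_mul,
            hcardSB]
      _ = μ (⋃ b ∈ SB, SRW8.cyl ψ (2*n) b) :=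
          (measure_biUnion_finset hdisj (fun b _ => SRW8.measurableSet_cyl hmeas b)).symm
      _ ≤ μ {ω | rwY ψ (2*n) ω = 0} := measure_mono hsub
  -- cardinality bound
  have hcard : S.card ≤ 2 * ((2*n).choose (n + Mn)) := by
    have hsubS : S ⊆
        (Finset.univ.filter fun b : Fin (2*n) → Bool =>
          (∃ k ≤ 2*n, SRW8.ps (2*n) b k = (Mn:ℤ)) ∧ SRW8.ps (2*n) b (2*n) = 0) ∪
        (Finset.univ.filter fun b : Fin (2*n) → Bool =>
          (∃ k ≤ 2*n, SRW8.ps (2*n) b k = -(Mn:ℤ)) ∧ SRW8.ps (2*n) b (2*n) = 0) := by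
      intro b hb
      rw [hSdef, Finset.mem_filter] at hb
      obtain ⟨-, ⟨k, hk, habs⟩, hend⟩ := hb
      rw [Finset.mem_union, Finset.mem_filter, Finset.mem_filter]
      have hstep : ∀ j, SRW8.ps (2*n) b (j+1) ≤ SRW8.ps (2*n) b j + 1 := by
        intro j
        rw [SRW8.ps_succ]
        have := SRW8.stepVal_le (m := 2*n) (b := b) j
        omega
      have hstep' : ∀ j, -SRW8.ps (2*n) b (j+1) ≤ -SRW8.ps (2*n) b j + 1 := by
        intro j
        rw [SRW8.ps_succ]
        have := SRW8.neg_one_le_stepVal (m := 2*n) (b := b) j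
        omega
      rcases abs_cases (SRW8.ps (2*n) b k) with ⟨hc, -⟩ | ⟨hc, -⟩
      · left
        refine ⟨Finset.mem_univ _, ?_, hend⟩
        obtain ⟨k', hk', he'⟩ := SRW8.ivt (SRW8.ps (2*n) b) hstep k (Mn:ℤ)
          (by rw [SRW8.ps_zero]; positivity) (by omega)
        exact ⟨k', by omega, he'⟩
      · right
        refine ⟨Finset.mem_univ _, ?_, hend⟩
        obtain ⟨k', hk', he'⟩ := SRW8.ivt (fun j => -SRW8.ps (2*n) b j) hstep' k (Mn:ℤ)
          (by show (0:ℤ) - SRW8.ps (2*n) b 0 ≤ (Mn:ℤ); rw [SRW8.ps_zero]; positivity)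
          (by show (Mn:ℤ) ≤ -SRW8.ps (2*n) b k; omega)
        have he'' : -SRW8.ps (2*n) b k' = (Mn:ℤ) := he'
        exact ⟨k', by omega, by omega⟩
    calc S.card ≤ _ := Finset.card_le_card hsubS
      _ ≤ _ + _ := Finset.card_union_le _ _
      _ ≤ 2 * ((2*n).choose (n + Mn)) := by
        have hpos := SRW8.card_hit_end_le (2*n) (Mn:ℤ)
        have hneg := SRW8.card_hitneg_end_le (2*n) (Mn:ℤ)
        have hce : (Finset.univ.filter fun b : Fin (2*n) → Bool =>
            SRW8.ps (2*n) b (2*n) = 2*(Mn:ℤ)).card = (2*n).choose (n + Mn) :=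
          SRW8.card_end (2*n) (2*(Mn:ℤ)) (n + Mn) (by push_cast; ring)
        omega
  -- numeric key inequality
  have hkey : Real.exp a * (((2*n).choose (n+Mn) : ℕ) : ℝ) ≤ (((2*n).choose n : ℕ) : ℝ) :=
    SRW8.key_binom n Mn a hn2 ha10 haM
  -- final chain
  have hcast : ((2 * ((2*n).choose (n + Mn)) : ℕ) : ℝ≥0∞)
      ≤ ENNReal.ofReal (2 * Real.exp (-a)) * (((2*n).choose n : ℕ) : ℝ≥0∞) := by
    rw [← ENNReal.ofReal_natCast (2 * ((2*n).choose (n + Mn))),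
      ← ENNReal.ofReal_natCast ((2*n).choose n),
      ← ENNReal.ofReal_mul (by positivity)]
    apply ENNReal.ofReal_le_ofReal
    push_cast
    rw [Real.exp_neg]
    have hE : (0:ℝ) < Real.exp a := Real.exp_pos a
    have heq : (2:ℝ) * (((2*n).choose (n + Mn) : ℕ) : ℝ)
        = 2 * (Real.exp a)⁻¹ * (Real.exp a * (((2*n).choose (n + Mn) : ℕ) : ℝ)) := by
      field_simp
    calc (2:ℝ) * (((2*n).choose (n + Mn) : ℕ) : ℝ)
        = 2 * (Real.exp a)⁻¹ * (Real.exp a * (((2*n).choose (n + Mn) : ℕ) : ℝ)) := heq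
      _ ≤ 2 * (Real.exp a)⁻¹ * (((2*n).choose n : ℕ) : ℝ) := by
          apply mul_le_mul_of_nonneg_left hkey (by positivity)
  calc μ ({ω | ∃ k ≤ 2*n, x ≤ (|rwY ψ k ω| : ℝ)} ∩ {ω | rwY ψ (2*n) ω = 0})
      ≤ (S.card : ℝ≥0∞) * (1/2 : ℝ≥0∞)^(2*n) := hup
    _ ≤ ((2 * ((2*n).choose (n + Mn)) : ℕ) : ℝ≥0∞) * (1/2 : ℝ≥0∞)^(2*n) := by
        exact mul_le_mul_left (Nat.cast_le.mpr hcard) _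
    _ ≤ (ENNReal.ofReal (2 * Real.exp (-a)) * (((2*n).choose n : ℕ) : ℝ≥0∞))
          * (1/2 : ℝ≥0∞)^(2*n) := mul_le_mul_left hcast _
    _ = ENNReal.ofReal (2 * Real.exp (-a))
          * ((((2*n).choose n : ℕ) : ℝ≥0∞) * (1/2 : ℝ≥0∞)^(2*n)) := by rw [mul_assoc]
    _ ≤ ENNReal.ofReal (2 * Real.exp (-a)) * μ {ω | rwY ψ (2*n) ω = 0} :=
        mul_le_mul_right hlow _
end

section
/- With notation as above, on the event B_n = {|Δ_n| > n^{1/2+δ₃}} (δ₃ > 0), for all large n one has the conditional large-deviation bound P(X_{2n} = 0 | F∨G) ≤ exp(-(m₁²/(4s²)) n^{2δ₃} + O(n^{3δ₃ - 1/2})), where m₁, s² are the mean and variance of the geometric jump law. -/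
open MeasureTheory ProbabilityTheory Finset
open scoped ENNReal NNReal

set_option maxHeartbeats 1000000

/- ### Auxiliary lemmas -/

/-- Splitting a product over the index set `S = ⋃_{y ∈ supp η} {(i,y) : i < η y}`. -/
private lemma S_prod {M : Type*} [CommMonoid M] (η : ℤ →₀ ℕ) (F : ℕ × ℤ → M) :
    ∏ z ∈ η.support.biUnion (fun y => (Finset.range (η y)).image (fun i => (i, y))), F z
      = ∏ y ∈ η.support, ∏ i ∈ Finset.range (η y), F (i, y) := by
  rw [Finset.prod_biUnion]
  · refine Finset.prod_congr rfl fun y _ => ?_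
    refine Finset.prod_image ?_
    intro i _ j _ h
    simpa using congrArg Prod.fst h
  · intro y _ z _ hyz
    refine Finset.disjoint_left.2 ?_
    rintro ⟨i, w⟩ hiw hjw
    simp only [Finset.mem_image, Finset.mem_range, Prod.mk.injEq] at hiw hjw
    obtain ⟨_, _, _, rfl⟩ := hiw
    obtain ⟨_, _, _, rfl⟩ := hjw
    exact hyz rfl

private lemma S_sum {M : Type*} [AddCommMonoid M] (η : ℤ →₀ ℕ) (F : ℕ × ℤ → M) :
    ∑ z ∈ η.support.biUnion (fun y => (Finset.range (η y)).image (fun i => (i, y))), F z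
      = ∑ y ∈ η.support, ∑ i ∈ Finset.range (η y), F (i, y) := by
  rw [Finset.sum_biUnion]
  · refine Finset.sum_congr rfl fun y _ => ?_
    refine Finset.sum_image ?_
    intro i _ j _ h
    simpa using congrArg Prod.fst h
  · intro y _ z _ hyz
    refine Finset.disjoint_left.2 ?_
    rintro ⟨i, w⟩ hiw hjw
    simp only [Finset.mem_image, Finset.mem_range, Prod.mk.injEq] at hiw hjw
    obtain ⟨_, _, _, rfl⟩ := hiw
    obtain ⟨_, _, _, rfl⟩ := hjw
    exact hyz rfl

/-- `∫⁻` of a finite product of independent `ℝ≥0∞`-valued random variables. -/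
private lemma lintegral_prod_indep {Ω ι : Type*} [MeasurableSpace Ω] {μ : Measure Ω}
    [IsProbabilityMeasure μ] {f : ι → Ω → ℝ≥0∞} (hm : ∀ i, Measurable (f i))
    (hf : iIndepFun f μ) (s : Finset ι) :
    ∫⁻ ω, ∏ i ∈ s, f i ω ∂μ = ∏ i ∈ s, ∫⁻ ω, f i ω ∂μ := by
  classical
  induction s using Finset.induction_on with
  | empty => simp
  | @insert i s hi ih =>
    simp_rw [Finset.prod_insert hi]
    have hindep : IndepFun (f i) (fun ω => ∏ j ∈ s, f j ω) μ := by
      have h := (hf.indepFun_finsetProd_of_notMem hm hi).symm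
      have heq : (∏ j ∈ s, f j) = fun ω => ∏ j ∈ s, f j ω := by
        funext ω; simp [Finset.prod_apply]
      rwa [heq] at h
    rw [lintegral_mul_eq_lintegral_mul_lintegral_of_indepFun'' (hm i).aemeasurable
      ((Finset.measurable_prod s fun j _ => hm j).aemeasurable) hindep, ih]

/-- The Laplace transform of a geometric random variable. -/
private lemma geom_lintegral {Ω : Type*} [MeasurableSpace Ω] (μ : Measure Ω)
    {p q : ℝ} (hp : 0 ≤ p) (hq0 : 0 ≤ q) (X : Ω → ℕ) (hX : Measurable X)
    (hdist : ∀ ℓ : ℕ, μ {ω | X ω = ℓ} = ENNReal.ofReal (p * q ^ ℓ)) {s : ℝ}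
    (hs : q * Real.exp s < 1) :
    ∫⁻ ω, ENNReal.ofReal (Real.exp (s * (X ω : ℝ))) ∂μ
      = ENNReal.ofReal (p / (1 - q * Real.exp s)) := by
  have hg : Measurable (fun k : ℕ => ENNReal.ofReal (Real.exp (s * (k : ℝ)))) :=
    measurable_from_nat
  rw [← lintegral_map hg hX, lintegral_countable']
  have hmap : ∀ ℓ : ℕ, (μ.map X) {ℓ} = ENNReal.ofReal (p * q ^ ℓ) := by
    intro ℓ
    rw [Measure.map_apply hX (measurableSet_singleton ℓ)]
    have : X ⁻¹' {ℓ} = {ω | X ω = ℓ} := rfl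
    rw [this, hdist]
  have hterm : ∀ ℓ : ℕ,
      ENNReal.ofReal (Real.exp (s * (ℓ : ℝ))) * (μ.map X) {ℓ}
        = ENNReal.ofReal (p * (q * Real.exp s) ^ ℓ) := by
    intro ℓ
    rw [hmap ℓ, ← ENNReal.ofReal_mul (Real.exp_nonneg _)]
    congr 1
    rw [mul_comm s, Real.exp_nat_mul, mul_pow]
    ring
  rw [tsum_congr hterm]
  have hr0 : 0 ≤ q * Real.exp s := mul_nonneg hq0 (Real.exp_nonneg _)
  have hsummable : Summable (fun ℓ : ℕ => p * (q * Real.exp s) ^ ℓ) :=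
    (summable_geometric_of_lt_one hr0 hs).mul_left p
  have hnn : ∀ ℓ : ℕ, 0 ≤ p * (q * Real.exp s) ^ ℓ :=
    fun ℓ => mul_nonneg hp (pow_nonneg hr0 ℓ)
  rw [← ENNReal.ofReal_tsum_of_nonneg hnn hsummable]
  congr 1
  rw [tsum_mul_left, tsum_geometric_of_lt_one hr0 hs, div_eq_mul_inv]

/-- Taylor-type bound for the geometric Laplace transform near `0`. -/
private lemma geom_mgf_bound {p q : ℝ} (hp : 0 < p) (hp1 : p < 1) (hq : q = 1 - p) :
    ∃ K : ℝ, 0 < K ∧ ∃ t₀ : ℝ, 0 < t₀ ∧ ∀ s : ℝ, |s| ≤ t₀ →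
      q * Real.exp s < 1 ∧
      p / (1 - q * Real.exp s) ≤
        Real.exp ((q / p) * s + (q / (2 * p ^ 2)) * s ^ 2 + K * |s| ^ 3) := by
  have hq0 : 0 < q := by rw [hq]; linarith
  set a : ℝ := q / p with ha_def
  have ha : 0 < a := div_pos hq0 hp
  refine ⟨a + 2 * a ^ 2 + 16 * a ^ 3, by positivity, min 1 (p / (4 * q)), by positivity, ?_⟩
  intro s hs
  have hb0 : (0 : ℝ) ≤ |s| := abs_nonneg s
  have hs1 : |s| ≤ 1 := le_trans hs (min_le_left _ _)
  have hs2 : |s| ≤ p / (4 * q) := le_trans hs (min_le_right _ _)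
  set u : ℝ := Real.exp s - 1 with hu_def
  have hu1 : |u| ≤ 2 * |s| := Real.abs_exp_sub_one_le hs1
  have hu2 : |u - s| ≤ s ^ 2 := Real.abs_exp_sub_one_sub_id_le hs1
  -- third order bound
  have hu3 : |u - s - s ^ 2 / 2| ≤ |s| ^ 3 := by
    have h := Real.exp_bound hs1 (n := 3) (by norm_num)
    have hsum : ∑ m ∈ Finset.range 3, s ^ m / (Nat.factorial m) = 1 + s + s ^ 2 / 2 := by
      simp [Finset.sum_range_succ, Nat.factorial]
    rw [hsum] at h
    have : u - s - s ^ 2 / 2 = Real.exp s - (1 + s + s ^ 2 / 2) := by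
      rw [hu_def]; ring
    rw [this]
    calc |Real.exp s - (1 + s + s ^ 2 / 2)|
        ≤ |s| ^ 3 * ((3 : ℕ).succ / ((Nat.factorial 3) * 3)) := h
      _ ≤ |s| ^ 3 := by
          have : ((3 : ℕ).succ / ((Nat.factorial 3 : ℝ) * 3)) = 2 / 9 := by
            norm_num [Nat.factorial]
          rw [this]
          nlinarith [pow_nonneg hb0 3]
  -- positivity of the denominator
  have hqu : q * |u| ≤ p / 2 := by
    calc q * |u| ≤ q * (2 * |s|) := by nlinarith
      _ ≤ q * (2 * (p / (4 * q))) := by nlinarith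
      _ = p / 2 := by field_simp; ring
  have hque : q * Real.exp s = q + q * u := by rw [hu_def]; ring
  have hpos : 0 < 1 - q * Real.exp s := by
    have h1 : q * u ≤ q * |u| := by nlinarith [le_abs_self u]
    have : 1 - q * Real.exp s = p - q * u := by rw [hque, hq]; ring
    rw [this]; linarith
  refine ⟨by linarith, ?_⟩
  -- rewrite the left side as 1/(1-x)
  set x : ℝ := a * u with hx_def
  have hxabs : |x| ≤ 1 / 2 := by
    rw [hx_def, abs_mul, abs_of_pos ha]
    calc a * |u| ≤ a * (2 * |s|) := by nlinarith
      _ ≤ (q / p) * (2 * (p / (4 * q))) := by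
          rw [ha_def]
          have h2s : 2 * |s| ≤ 2 * (p / (4 * q)) := by linarith
          nlinarith [div_pos hq0 hp]
      _ = 1 / 2 := by field_simp; ring
  have hfac : 1 - q * Real.exp s = p * (1 - x) := by
    rw [hque, hx_def, ha_def, hq]; field_simp; ring
  have h1x : 0 < 1 - x := by
    by_contra h
    push_neg at h
    nlinarith
  have hlhs : p / (1 - q * Real.exp s) = (1 - x)⁻¹ := by
    rw [hfac, ← div_div, div_self (ne_of_gt hp), one_div]
  -- logarithmic bound : -log(1-x) ≤ x + x²/2 + 2|x|³
  have hlog : -Real.log (1 - x) ≤ x + x ^ 2 / 2 + 2 * |x| ^ 3 := by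
    have h := Real.abs_log_sub_add_sum_range_le (by linarith [abs_nonneg x] : |x| < 1) 2
    have hsum2 : ∑ i ∈ Finset.range 2, x ^ (i + 1) / (i + 1) = x + x ^ 2 / 2 := by
      simp [Finset.sum_range_succ]
      norm_num
    rw [hsum2] at h
    have hden : 1 - |x| ≥ 1 / 2 := by linarith
    have habs3 : |x| ^ 3 / (1 - |x|) ≤ 2 * |x| ^ 3 := by
      rw [div_le_iff₀ (by linarith)]
      nlinarith [pow_nonneg (abs_nonneg x) 3]
    have h' : -(x + x ^ 2 / 2) - Real.log (1 - x) ≤ |x| ^ 3 / (1 - |x|) := by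
      have := neg_abs_le (x + x ^ 2 / 2 + Real.log (1 - x))
      have habs := abs_le.1 h
      linarith [habs.1]
    linarith
  have hexp : (1 - x)⁻¹ = Real.exp (-Real.log (1 - x)) := by
    rw [Real.exp_neg, Real.exp_log h1x]
  rw [hlhs, hexp]
  apply Real.exp_le_exp.2
  refine le_trans hlog ?_
  -- final polynomial estimate
  have hu_up : u ≤ s + s ^ 2 / 2 + |s| ^ 3 := by
    have := abs_le.1 hu3
    linarith [this.1, this.2]
  have hsq : s ^ 2 = |s| ^ 2 := (sq_abs s).symm
  have husq : u ^ 2 ≤ |s| ^ 2 + 3 * |s| ^ 3 := by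
    have h1 : |u ^ 2 - s ^ 2| = |u - s| * |u + s| := by
      rw [← abs_mul]; ring_nf
    have h2 : |u + s| ≤ 3 * |s| := by
      calc |u + s| ≤ |u| + |s| := abs_add_le u s
        _ ≤ 3 * |s| := by linarith
    have h3 : |u ^ 2 - s ^ 2| ≤ s ^ 2 * (3 * |s|) := by
      rw [h1]
      apply mul_le_mul hu2 h2 (abs_nonneg _) (by nlinarith)
    have h4 : u ^ 2 - s ^ 2 ≤ 3 * (s ^ 2 * |s|) := by nlinarith [le_abs_self (u ^ 2 - s ^ 2)]
    have h5 : s ^ 2 * |s| = |s| ^ 3 := by rw [hsq]; ring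
    nlinarith
  have hu_c : |u| ^ 3 ≤ 8 * |s| ^ 3 := by
    have := pow_le_pow_left₀ (abs_nonneg u) hu1 3
    nlinarith [this]
  have hxcube : |x| ^ 3 = a ^ 3 * |u| ^ 3 := by
    rw [hx_def, abs_mul, abs_of_pos ha, mul_pow]
  have hkey : x + x ^ 2 / 2 + 2 * |x| ^ 3
      ≤ a * s + ((a + a ^ 2) / 2) * s ^ 2 + (a + 2 * a ^ 2 + 16 * a ^ 3) * |s| ^ 3 := by
    have t1 : x ≤ a * s + a * (s ^ 2 / 2) + a * |s| ^ 3 := by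
      rw [hx_def]
      nlinarith
    have t2 : x ^ 2 / 2 ≤ (a ^ 2 / 2) * |s| ^ 2 + (3 / 2) * a ^ 2 * |s| ^ 3 := by
      have : x ^ 2 = a ^ 2 * u ^ 2 := by rw [hx_def]; ring
      nlinarith [sq_nonneg a]
    have t3 : 2 * |x| ^ 3 ≤ 16 * a ^ 3 * |s| ^ 3 := by
      rw [hxcube]
      nlinarith [pow_pos ha 3]
    rw [hsq]
    nlinarith [pow_nonneg hb0 3, pow_nonneg hb0 2, sq_nonneg a]
  have hcoeff : (a + a ^ 2) / 2 = q / (2 * p ^ 2) := by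
    rw [ha_def, hq]; field_simp; ring
  rw [← ha_def] at *
  calc x + x ^ 2 / 2 + 2 * |x| ^ 3
      ≤ a * s + ((a + a ^ 2) / 2) * s ^ 2 + (a + 2 * a ^ 2 + 16 * a ^ 3) * |s| ^ 3 := hkey
    _ = (q / p) * s + (q / (2 * p ^ 2)) * s ^ 2 + (a + 2 * a ^ 2 + 16 * a ^ 3) * |s| ^ 3 := by
        rw [hcoeff, ha_def]

/-- Core Chernoff-type bound: exponential tilting of the event `{X_{2n} = 0}`. -/
private lemma chernoff_core {Ω : Type*} [MeasurableSpace Ω] (μ : Measure Ω)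
    [IsProbabilityMeasure μ] {p q : ℝ} (hp0 : 0 ≤ p) (hq0 : 0 ≤ q)
    (ξ : ℕ × ℤ → Ω → ℕ) (hmeas : ∀ iy, Measurable (ξ iy))
    (hindep : iIndepFun ξ μ)
    (hdist : ∀ iy, ∀ ℓ : ℕ, μ {ω | ξ iy ω = ℓ} = ENNReal.ofReal (p * q ^ ℓ))
    (η : ℤ →₀ ℕ) (ε : ℤ → ℤ) (d : ℝ)
    (hd : ∀ y : ℤ, q * Real.exp (d * (ε y : ℝ)) < 1) :
    μ {ω | (∑ y ∈ η.support, ε y * ∑ i ∈ Finset.range (η y), (ξ (i, y) ω : ℤ) : ℤ) = 0}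
      ≤ ∏ y ∈ η.support,
          (ENNReal.ofReal (p / (1 - q * Real.exp (d * (ε y : ℝ))))) ^ (η y) := by
  classical
  set S : Finset (ℕ × ℤ) :=
    η.support.biUnion (fun y => (Finset.range (η y)).image (fun i => (i, y))) with hS
  set f : ℕ × ℤ → Ω → ℝ≥0∞ :=
    fun iy => (fun k : ℕ => ENNReal.ofReal (Real.exp (d * (ε iy.2 : ℝ) * (k : ℝ)))) ∘ ξ iy
    with hf_def
  have hfmeas : ∀ iy, Measurable (f iy) := fun iy => measurable_from_nat.comp (hmeas iy)
  have hfindep : iIndepFun f μ :=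
    hindep.comp _ (fun iy => measurable_from_nat)
  set Z : Ω → ℤ :=
    fun ω => (∑ y ∈ η.support, ε y * ∑ i ∈ Finset.range (η y), (ξ (i, y) ω : ℤ) : ℤ) with hZ_def
  have hZmeas : Measurable Z := by
    apply Finset.measurable_sum
    intro y _
    exact (Finset.measurable_sum _ fun i _ =>
      measurable_from_nat.comp (hmeas (i, y))).const_mul (ε y)
  have hE : MeasurableSet {ω | Z ω = 0} := hZmeas (measurableSet_singleton 0)
  -- On the event, the product of the tilts equals 1
  have hone : ∀ ω, Z ω = 0 → ∏ iy ∈ S, f iy ω = 1 := by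
    intro ω hω
    have hprod : ∏ iy ∈ S, f iy ω
        = ENNReal.ofReal (Real.exp (∑ iy ∈ S, d * (ε iy.2 : ℝ) * (ξ iy ω : ℝ))) := by
      rw [Real.exp_sum, ENNReal.ofReal_prod_of_nonneg (fun iy _ => Real.exp_nonneg _)]
      rfl
    rw [hprod]
    have hzero : ∑ iy ∈ S, d * (ε iy.2 : ℝ) * (ξ iy ω : ℝ) = 0 := by
      rw [hS, S_sum η (fun iy => d * (ε iy.2 : ℝ) * (ξ iy ω : ℝ))]
      have : ∀ y ∈ η.support,
          ∑ i ∈ Finset.range (η y), d * (ε y : ℝ) * (ξ (i, y) ω : ℝ)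
            = d * ((ε y : ℝ) * ∑ i ∈ Finset.range (η y), (ξ (i, y) ω : ℝ)) := by
        intro y _
        rw [Finset.mul_sum, Finset.mul_sum]
        exact Finset.sum_congr rfl fun i _ => by ring
      rw [Finset.sum_congr rfl this, ← Finset.mul_sum]
      have hcast : ∑ y ∈ η.support, (ε y : ℝ) * ∑ i ∈ Finset.range (η y), (ξ (i, y) ω : ℝ)
          = ((Z ω : ℤ) : ℝ) := by
        rw [hZ_def]
        push_cast
        rfl
      rw [hcast, hω]
      simp
    rw [hzero]
    simp
  -- Chernoff: bound the measure by the integral of the product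
  have hstep1 : μ {ω | Z ω = 0} ≤ ∫⁻ ω, ∏ iy ∈ S, f iy ω ∂μ := by
    calc μ {ω | Z ω = 0} = ∫⁻ _ in {ω | Z ω = 0}, 1 ∂μ := (setLIntegral_one _).symm
      _ = ∫⁻ ω in {ω | Z ω = 0}, ∏ iy ∈ S, f iy ω ∂μ := by
          refine setLIntegral_congr_fun hE (fun ω hω => ?_)
          exact (hone ω hω).symm
      _ ≤ ∫⁻ ω, ∏ iy ∈ S, f iy ω ∂μ := setLIntegral_le_lintegral _ _
  -- independence and the geometric Laplace transform
  have hstep2 : ∫⁻ ω, ∏ iy ∈ S, f iy ω ∂μ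
      = ∏ iy ∈ S, ENNReal.ofReal (p / (1 - q * Real.exp (d * (ε iy.2 : ℝ)))) := by
    rw [lintegral_prod_indep hfmeas hfindep S]
    refine Finset.prod_congr rfl fun iy _ => ?_
    exact geom_lintegral μ hp0 hq0 (ξ iy) (hmeas iy) (hdist iy) (hd iy.2)
  have hstep3 : ∏ iy ∈ S, ENNReal.ofReal (p / (1 - q * Real.exp (d * (ε iy.2 : ℝ))))
      = ∏ y ∈ η.support,
          (ENNReal.ofReal (p / (1 - q * Real.exp (d * (ε y : ℝ))))) ^ (η y) := by
    rw [hS, S_prod η (fun iy => ENNReal.ofReal (p / (1 - q * Real.exp (d * (ε iy.2 : ℝ)))))]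
    refine Finset.prod_congr rfl fun y _ => ?_
    have hc : ∀ i ∈ Finset.range (η y),
        ENNReal.ofReal (p / (1 - q * Real.exp (d * (ε (i, y).2 : ℝ))))
          = ENNReal.ofReal (p / (1 - q * Real.exp (d * (ε y : ℝ)))) := fun i _ => rfl
    rw [Finset.prod_congr rfl hc, Finset.prod_const, Finset.card_range]
  calc μ {ω | Z ω = 0} ≤ ∫⁻ ω, ∏ iy ∈ S, f iy ω ∂μ := hstep1
    _ = _ := by rw [hstep2, hstep3]

/-- on the event `B_n = {|Δ_n| > n^{1/2+δ₃}}`, the conditional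
probability that the horizontal displacement vanishes satisfies the large-deviation
bound `P(X_{2n} = 0 | F∨G) ≤ exp(-(m₁²/(4s²)) n^{2δ₃} + O(n^{3δ₃-1/2}))`. -/
theorem embedded_walk_large_deviation_on_Bn
    {Ω : Type*} [MeasurableSpace Ω] (μ : Measure Ω) [IsProbabilityMeasure μ]
    (p q : ℝ) (hp : 0 < p) (hp1 : p < 1) (hq : q = 1 - p)
    (δ₃ : ℝ) (hδ₃ : 0 < δ₃) :
    ∃ C : ℝ, 0 < C ∧ ∃ N : ℕ, ∀ n ≥ N,
      ∀ ξ : ℕ × ℤ → Ω → ℕ, (∀ iy, Measurable (ξ iy)) →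
        iIndepFun ξ μ →
        (∀ iy, ∀ ℓ : ℕ, μ {ω | ξ iy ω = ℓ} = ENNReal.ofReal (p * q ^ ℓ)) →
      ∀ η : ℤ →₀ ℕ, (∑ y ∈ η.support, η y = 2 * n) →
      ∀ ε : ℤ → ℤ, (∀ y, ε y = 1 ∨ ε y = -1) →
        ((n : ℝ) ^ ((1 : ℝ)/2 + δ₃) < |((∑ y ∈ η.support, ε y * (η y : ℤ) : ℤ) : ℝ)|) →
        μ {ω | (∑ y ∈ η.support, ε y * ∑ i ∈ Finset.range (η y), (ξ (i, y) ω : ℤ) : ℤ) = 0}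
          ≤ ENNReal.ofReal
              (Real.exp (-((q / p) ^ 2 / (4 * (q / p ^ 2))) * (n : ℝ) ^ (2 * δ₃)
                + C * (n : ℝ) ^ (3 * δ₃ - 1/2))) := by
  have hq0 : 0 < q := by rw [hq]; linarith
  have hcoef : (q / p) ^ 2 / (4 * (q / p ^ 2)) = q / 4 := by
    field_simp
  obtain ⟨K, hK, t₀, ht₀, hA⟩ := geom_mgf_bound hp hp1 hq
  rcases lt_or_ge δ₃ (1 / 2 : ℝ) with hδlt | hδge
  · -- main case : δ₃ < 1/2, real Chernoff argument
    refine ⟨K * p ^ 3 / 4 + q / 4 + 1, by positivity, ?_⟩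
    have hev : ∀ᶠ n : ℕ in Filter.atTop, (p / 2) * (n : ℝ) ^ (δ₃ - 1 / 2) ≤ t₀ := by
      have h0 : Filter.Tendsto (fun x : ℝ => x ^ (-(1 / 2 - δ₃))) Filter.atTop (nhds 0) :=
        tendsto_rpow_neg_atTop (by linarith)
      have h1 : Filter.Tendsto (fun n : ℕ => (n : ℝ) ^ (δ₃ - 1 / 2)) Filter.atTop (nhds 0) := by
        have h := h0.comp tendsto_natCast_atTop_atTop (α := ℕ)
        have heq : (fun n : ℕ => (n : ℝ) ^ (δ₃ - 1 / 2))
            = (fun x : ℝ => x ^ (-(1 / 2 - δ₃))) ∘ (Nat.cast : ℕ → ℝ) := by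
          funext m
          show (m : ℝ) ^ (δ₃ - 1 / 2) = (m : ℝ) ^ (-(1 / 2 - δ₃))
          congr 1
          ring
        rw [heq]
        exact h
      have h2 : Filter.Tendsto (fun n : ℕ => (p / 2) * (n : ℝ) ^ (δ₃ - 1 / 2))
          Filter.atTop (nhds 0) := by
        have := h1.const_mul (p / 2)
        simpa using this
      exact (h2.eventually_lt_const ht₀).mono fun n hn => hn.le
    obtain ⟨N₀, hN₀⟩ := Filter.eventually_atTop.mp hev
    refine ⟨max N₀ 1, fun n hn ξ hmeas hindep hdist η hη ε hε hΔ => ?_⟩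
    have hn1 : 1 ≤ n := le_trans (le_max_right _ _) hn
    have hν0 : (0 : ℝ) < n := by exact_mod_cast hn1
    set w : ℝ := (n : ℝ) ^ (δ₃ - 1 / 2) with hw_def
    have hw0 : 0 < w := Real.rpow_pos_of_pos hν0 _
    set t : ℝ := (p / 2) * w with ht_def
    have ht_pos : 0 < t := by positivity
    have ht_le : t ≤ t₀ := hN₀ n (le_trans (le_max_left _ _) hn)
    set Δ : ℤ := ∑ y ∈ η.support, ε y * (η y : ℤ) with hΔ_def
    set σ : ℝ := if 0 ≤ Δ then 1 else -1 with hσ_def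
    have hσ1 : |σ| = 1 := by rw [hσ_def]; split_ifs <;> simp
    have hσΔ : σ * (Δ : ℝ) = |(Δ : ℝ)| := by
      rw [hσ_def]
      split_ifs with h
      · rw [abs_of_nonneg (by exact_mod_cast h)]; ring
      · push_neg at h
        rw [abs_of_neg (by exact_mod_cast h)]; ring
    set d : ℝ := -t * σ with hd_def
    have hεabs : ∀ y, |(ε y : ℝ)| = 1 := by
      intro y
      rcases hε y with h | h <;> rw [h] <;> norm_num
    have hdabs : ∀ y, |d * (ε y : ℝ)| = t := by
      intro y
      rw [abs_mul, hεabs, hd_def, abs_mul, abs_neg, abs_of_pos ht_pos, hσ1]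
      ring
    have hAy : ∀ y : ℤ, q * Real.exp (d * (ε y : ℝ)) < 1 ∧
        p / (1 - q * Real.exp (d * (ε y : ℝ))) ≤
          Real.exp ((q / p) * (d * (ε y : ℝ)) + (q / (2 * p ^ 2)) * (d * (ε y : ℝ)) ^ 2
            + K * |d * (ε y : ℝ)| ^ 3) := by
      intro y
      exact hA _ (by rw [hdabs]; exact ht_le)
    -- apply Chernoff core
    have hcore := chernoff_core μ hp.le hq0.le ξ hmeas hindep hdist η ε d
      (fun y => (hAy y).1)
    refine le_trans hcore ?_
    -- bound each factor
    have hfac : ∀ y ∈ η.support,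
        (ENNReal.ofReal (p / (1 - q * Real.exp (d * (ε y : ℝ))))) ^ (η y)
          ≤ ENNReal.ofReal (Real.exp ((η y : ℝ) *
              ((q / p) * (d * (ε y : ℝ)) + (q / (2 * p ^ 2)) * t ^ 2 + K * t ^ 3))) := by
      intro y _
      have h1 : (d * (ε y : ℝ)) ^ 2 = t ^ 2 := by
        rw [← sq_abs, hdabs]
      have h2 : |d * (ε y : ℝ)| ^ 3 = t ^ 3 := by rw [hdabs]
      have hb := (hAy y).2
      rw [h1, h2] at hb
      calc (ENNReal.ofReal (p / (1 - q * Real.exp (d * (ε y : ℝ))))) ^ (η y)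
          ≤ (ENNReal.ofReal (Real.exp ((q / p) * (d * (ε y : ℝ))
              + (q / (2 * p ^ 2)) * t ^ 2 + K * t ^ 3))) ^ (η y) :=
            pow_le_pow_left' (ENNReal.ofReal_le_ofReal hb) _
        _ = ENNReal.ofReal ((Real.exp ((q / p) * (d * (ε y : ℝ))
              + (q / (2 * p ^ 2)) * t ^ 2 + K * t ^ 3)) ^ (η y)) := by
            rw [ENNReal.ofReal_pow (Real.exp_nonneg _)]
        _ = ENNReal.ofReal (Real.exp ((η y : ℝ) *
              ((q / p) * (d * (ε y : ℝ)) + (q / (2 * p ^ 2)) * t ^ 2 + K * t ^ 3))) := by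
            rw [← Real.exp_nat_mul]
    calc ∏ y ∈ η.support, (ENNReal.ofReal (p / (1 - q * Real.exp (d * (ε y : ℝ))))) ^ (η y)
        ≤ ∏ y ∈ η.support, ENNReal.ofReal (Real.exp ((η y : ℝ) *
            ((q / p) * (d * (ε y : ℝ)) + (q / (2 * p ^ 2)) * t ^ 2 + K * t ^ 3))) :=
          Finset.prod_le_prod' hfac
      _ = ENNReal.ofReal (Real.exp (∑ y ∈ η.support, (η y : ℝ) *
            ((q / p) * (d * (ε y : ℝ)) + (q / (2 * p ^ 2)) * t ^ 2 + K * t ^ 3))) := by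
          rw [Real.exp_sum, ENNReal.ofReal_prod_of_nonneg (fun y _ => Real.exp_nonneg _)]
      _ ≤ ENNReal.ofReal
            (Real.exp (-((q / p) ^ 2 / (4 * (q / p ^ 2))) * (n : ℝ) ^ (2 * δ₃)
              + (K * p ^ 3 / 4 + q / 4 + 1) * (n : ℝ) ^ (3 * δ₃ - 1/2))) := by
          apply ENNReal.ofReal_le_ofReal
          apply Real.exp_le_exp.2
          -- compute the sum
          have hsplit : ∑ y ∈ η.support, (η y : ℝ) *
              ((q / p) * (d * (ε y : ℝ)) + (q / (2 * p ^ 2)) * t ^ 2 + K * t ^ 3)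
              = (q / p) * d * (Δ : ℝ)
                + (2 * (n : ℝ)) * ((q / (2 * p ^ 2)) * t ^ 2 + K * t ^ 3) := by
            rw [Finset.sum_congr rfl (fun y _ => by ring :
              ∀ y ∈ η.support, (η y : ℝ) *
                ((q / p) * (d * (ε y : ℝ)) + (q / (2 * p ^ 2)) * t ^ 2 + K * t ^ 3)
              = (q / p) * d * ((ε y : ℝ) * (η y : ℝ))
                + (η y : ℝ) * ((q / (2 * p ^ 2)) * t ^ 2 + K * t ^ 3))]
            rw [Finset.sum_add_distrib, ← Finset.mul_sum, ← Finset.sum_mul]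
            have hΔcast : ∑ y ∈ η.support, (ε y : ℝ) * (η y : ℝ) = ((Δ : ℤ) : ℝ) := by
              rw [hΔ_def]; push_cast; rfl
            have hcard : ∑ y ∈ η.support, (η y : ℝ) = 2 * (n : ℝ) := by
              rw [← Nat.cast_sum, hη]; push_cast; ring
            rw [hΔcast, hcard]
          rw [hsplit, hcoef]
          -- rpow bookkeeping
          have hrw1 : w * (n : ℝ) ^ ((1 : ℝ) / 2 + δ₃) = (n : ℝ) ^ (2 * δ₃) := by
            rw [hw_def, ← Real.rpow_add hν0]
            ring_nf
          have hrw2 : (n : ℝ) * (w * w) = (n : ℝ) ^ (2 * δ₃) := by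
            rw [hw_def, ← Real.rpow_add hν0]
            nth_rewrite 1 [← Real.rpow_one (n : ℝ)]
            rw [← Real.rpow_add hν0]
            ring_nf
          have hrw3 : (n : ℝ) * (w * w * w) = (n : ℝ) ^ (3 * δ₃ - 1 / 2) := by
            rw [hw_def, ← Real.rpow_add hν0, ← Real.rpow_add hν0]
            nth_rewrite 1 [← Real.rpow_one (n : ℝ)]
            rw [← Real.rpow_add hν0]
            ring_nf
          -- first order term
          have hfirst : (q / p) * d * (Δ : ℝ) ≤ -(q / 2) * (n : ℝ) ^ (2 * δ₃) := by
            have hqt : 0 ≤ (q / p) * t := by positivity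
            have h1 : (q / p) * t * (n : ℝ) ^ ((1 : ℝ) / 2 + δ₃)
                ≤ (q / p) * t * |(Δ : ℝ)| :=
              mul_le_mul_of_nonneg_left hΔ.le hqt
            have h2 : (q / p) * d * (Δ : ℝ) = -((q / p) * t * (σ * (Δ : ℝ))) := by
              rw [hd_def]; ring
            rw [h2, hσΔ]
            have h3 : (q / p) * t * (n : ℝ) ^ ((1 : ℝ) / 2 + δ₃)
                = (q / 2) * (n : ℝ) ^ (2 * δ₃) := by
              rw [ht_def, ← hrw1]
              field_simp
            linarith
          -- second order terms
          have hsecond : (2 * (n : ℝ)) * ((q / (2 * p ^ 2)) * t ^ 2 + K * t ^ 3)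
              = (q / 4) * (n : ℝ) ^ (2 * δ₃) + (K * p ^ 3 / 4) * (n : ℝ) ^ (3 * δ₃ - 1 / 2) := by
            rw [← hrw2, ← hrw3, ht_def]
            field_simp
            ring
          have hW3 : 0 ≤ (n : ℝ) ^ (3 * δ₃ - 1 / 2) := Real.rpow_nonneg hν0.le _
          rw [hsecond]
          have : (1 : ℝ)/2 = 1/2 := rfl
          nlinarith [hW3]
    -- done with main case
  · -- trivial case : δ₃ ≥ 1/2, the bound exceeds 1
    refine ⟨q / 4 + 1, by positivity, 1, fun n hn ξ _ _ _ η _ ε _ _ => ?_⟩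
    have hν1 : (1 : ℝ) ≤ (n : ℝ) := by exact_mod_cast hn
    have hmono : (n : ℝ) ^ (2 * δ₃) ≤ (n : ℝ) ^ (3 * δ₃ - 1 / 2) :=
      Real.rpow_le_rpow_of_exponent_le hν1 (by linarith)
    have hW : 0 ≤ (n : ℝ) ^ (2 * δ₃) := Real.rpow_nonneg (by linarith) _
    have hexp0 : 0 ≤ -((q / p) ^ 2 / (4 * (q / p ^ 2))) * (n : ℝ) ^ (2 * δ₃)
        + (q / 4 + 1) * (n : ℝ) ^ (3 * δ₃ - 1/2) := by
      rw [hcoef]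
      nlinarith
    calc μ _ ≤ 1 := prob_le_one
      _ ≤ ENNReal.ofReal (Real.exp (-((q / p) ^ 2 / (4 * (q / p ^ 2))) * (n : ℝ) ^ (2 * δ₃)
            + (q / 4 + 1) * (n : ℝ) ^ (3 * δ₃ - 1/2))) := by
          rw [← ENNReal.ofReal_one]
          exact ENNReal.ofReal_le_ofReal (Real.one_le_exp hexp0)
end

section
/- Let r(θ) = p/sqrt(p² + 2q(1-cosθ)) and suppose nonnegative integers (η(y))_{y∈Z} satisfy ∑_y η(y) = 2n and |∑_y (-1)^{s_y} η(y)| ≤ n^{1/2+δ₃} for some signs s_y. Then (1/2π) ∫_{-π}^{π} ∏_y χ(θ ε_y)^{η(y)} dθ = O(sqrt(log n / n)), where χ is the characteristic function of the geometric law of parameter p; equivalently, on A_n \ B_n one has P(X_{2n} = 0 | F∨G) = O(sqrt(log n / n)). -/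
open MeasureTheory Finset Real

/-- The characteristic function `χ(θ) = p/(1 - q e^{iθ})` of the geometric law. -/
noncomputable def geomChar (p q θ : ℝ) : ℂ :=
  (p : ℂ) / (1 - (q : ℂ) * Complex.exp (θ * Complex.I))

lemma norm_geomChar_sq (p q : ℝ) (hp : 0 ≤ p) (θ : ℝ) :
    ‖geomChar p q θ‖ ^ 2 = p ^ 2 / (1 - 2 * q * Real.cos θ + q ^ 2) := by
  have hd : ‖(1 : ℂ) - (q : ℂ) * Complex.exp (θ * Complex.I)‖ ^ 2
      = 1 - 2 * q * Real.cos θ + q ^ 2 := by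
    rw [← Complex.ofReal_one, show ((θ:ℂ) * Complex.I) = ((θ:ℝ):ℂ) * Complex.I from rfl,
      Complex.exp_mul_I, ← Complex.ofReal_cos, ← Complex.ofReal_sin,
      Complex.sq_norm, Complex.normSq_apply]
    simp [Complex.add_re, Complex.add_im, Complex.cos_ofReal_re, Complex.sin_ofReal_re]
    nlinarith [Real.sin_sq_add_cos_sq θ]
  rw [geomChar, norm_div, div_pow, hd, Complex.norm_real, Real.norm_of_nonneg hp]

set_option maxHeartbeats 1000000 in
/-- for occupation numbers `η` of total mass `2n` whose `ε`-signed sum is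
at most `n^{1/2+δ₃}` in absolute value, the return probability integral
`(1/2π) ∫_{-π}^{π} ∏_y χ(θ ε_y)^{η(y)} dθ` is `O(√(log n / n))`. -/
theorem fourier_return_integral_bound
    (p q : ℝ) (hp : 0 < p) (hp1 : p < 1) (hq : q = 1 - p)
    (δ₃ : ℝ) (hδ₃ : 0 < δ₃) :
    ∃ C : ℝ, 0 < C ∧ ∃ N : ℕ, ∀ n ≥ N,
      ∀ η : ℤ →₀ ℕ, (∑ y ∈ η.support, η y = 2 * n) →
      ∀ ε : ℤ → ℤ, (∀ y, ε y = 1 ∨ ε y = -1) →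
        (|((∑ y ∈ η.support, ε y * (η y : ℤ) : ℤ) : ℝ)| ≤ (n : ℝ) ^ ((1 : ℝ)/2 + δ₃)) →
        ‖(1 / (2 * (π : ℂ))) *
            ∫ θ in (-π : ℝ)..π, ∏ y ∈ η.support, (geomChar p q (θ * (ε y : ℝ))) ^ (η y)‖
          ≤ C * Real.sqrt (Real.log n / n) := by
  have hq0 : 0 < q := by rw [hq]; linarith
  have hπ : (0:ℝ) < π := Real.pi_pos
  obtain ⟨c, hc_def⟩ : ∃ c : ℝ, c = 4 * q / (π ^ 2 * p ^ 2) := ⟨_, rfl⟩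
  have hc : 0 < c := by rw [hc_def]; positivity
  refine ⟨1 / (2 * Real.sqrt c), by positivity, 3, fun n hn η hη ε hε _ => ?_⟩
  have hn3 : (3:ℝ) ≤ (n:ℝ) := by exact_mod_cast hn
  have hn0 : (0:ℝ) < n := by linarith
  -- denominator facts
  have hD : ∀ θ : ℝ, p ^ 2 ≤ 1 - 2 * q * Real.cos θ + q ^ 2 := fun θ => by
    nlinarith [Real.cos_le_one θ, hq0.le]
  have hDpos : ∀ θ : ℝ, (0:ℝ) < 1 - 2 * q * Real.cos θ + q ^ 2 := fun θ =>
    lt_of_lt_of_le (by positivity) (hD θ)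
  obtain ⟨g, hg_def⟩ : ∃ g : ℝ → ℝ,
      g = fun θ => p ^ 2 / (1 - 2 * q * Real.cos θ + q ^ 2) := ⟨_, rfl⟩
  have hg_nonneg : ∀ θ, 0 ≤ g θ := fun θ => by
    have := hDpos θ; simp only [hg_def]; positivity
  -- norm of the product
  have hprod : ∀ θ : ℝ,
      ‖∏ y ∈ η.support, (geomChar p q (θ * (ε y : ℝ))) ^ (η y)‖ = g θ ^ n := by
    intro θ
    have hcos : ∀ y, Real.cos (θ * (ε y : ℝ)) = Real.cos θ := by
      intro y; rcases hε y with h | h <;> simp [h, Real.cos_neg]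
    have h1 : ‖∏ y ∈ η.support, (geomChar p q (θ * (ε y : ℝ))) ^ (η y)‖
        = ∏ y ∈ η.support, ‖geomChar p q (θ * (ε y : ℝ))‖ ^ (η y) := by
      rw [norm_prod]; simp [norm_pow]
    have h2 : (‖∏ y ∈ η.support, (geomChar p q (θ * (ε y : ℝ))) ^ (η y)‖) ^ 2
        = (g θ ^ n) ^ 2 := by
      rw [h1, ← Finset.prod_pow]
      have heach : ∀ y ∈ η.support, (‖geomChar p q (θ * (ε y : ℝ))‖ ^ (η y)) ^ 2
          = (g θ) ^ (η y) := by
        intro y _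
        rw [← pow_mul, mul_comm (η y) 2, pow_mul, norm_geomChar_sq p q hp.le, hcos y, hg_def]
      rw [Finset.prod_congr rfl heach, Finset.prod_pow_eq_pow_sum, hη, ← pow_mul, mul_comm n 2]
    have hL : 0 ≤ ‖∏ y ∈ η.support, (geomChar p q (θ * (ε y : ℝ))) ^ (η y)‖ := norm_nonneg _
    have hR : 0 ≤ g θ ^ n := pow_nonneg (hg_nonneg θ) n
    calc ‖∏ y ∈ η.support, (geomChar p q (θ * (ε y : ℝ))) ^ (η y)‖
        = Real.sqrt ((‖∏ y ∈ η.support, (geomChar p q (θ * (ε y : ℝ))) ^ (η y)‖) ^ 2) :=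
          (Real.sqrt_sq hL).symm
      _ = Real.sqrt ((g θ ^ n) ^ 2) := by rw [h2]
      _ = g θ ^ n := Real.sqrt_sq hR
  -- pointwise bound
  have hpt : ∀ θ : ℝ, |θ| ≤ π → g θ ^ n ≤ (1 + (n:ℝ) * c * θ ^ 2)⁻¹ := by
    intro θ hθ
    have hcosb := Real.cos_le_one_sub_mul_cos_sq hθ
    have key : 4 * q / π ^ 2 * θ ^ 2 ≤ 2 * q * (1 - Real.cos θ) := by
      have h2 : q * Real.cos θ ≤ q * (1 - 2 / π ^ 2 * θ ^ 2) :=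
        mul_le_mul_of_nonneg_left hcosb hq0.le
      have h3 : q * (1 - 2 / π ^ 2 * θ ^ 2) = q - 2 * (q * θ ^ 2 / π ^ 2) := by ring
      rw [h3] at h2
      have h4 : 4 * q / π ^ 2 * θ ^ 2 = 4 * (q * θ ^ 2 / π ^ 2) := by ring
      rw [h4]; linarith
    have hpc : p ^ 2 * c = 4 * q / π ^ 2 := by
      rw [hc_def]; field_simp
    have hpc2 : p ^ 2 * c * θ ^ 2 = 4 * q / π ^ 2 * θ ^ 2 := by rw [hpc]
    have hDeq : 1 - 2 * q * Real.cos θ + q ^ 2 = p ^ 2 + 2 * q * (1 - Real.cos θ) := by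
      rw [hq]; ring
    have hDb : p ^ 2 * (1 + c * θ ^ 2) ≤ 1 - 2 * q * Real.cos θ + q ^ 2 := by
      rw [hDeq]; nlinarith [hpc2, key]
    have h1c : (0:ℝ) < 1 + c * θ ^ 2 := by positivity
    have hgθ : g θ ≤ (1 + c * θ ^ 2)⁻¹ := by
      simp only [hg_def]
      rw [← one_div, div_le_div_iff₀ (hDpos θ) h1c]
      nlinarith [hDb]
    have h3 : g θ ^ n ≤ ((1 + c * θ ^ 2)⁻¹) ^ n :=
      pow_le_pow_left₀ (hg_nonneg θ) hgθ n
    have h5 : 1 + (n:ℝ) * c * θ ^ 2 ≤ (1 + c * θ ^ 2) ^ n := by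
      have := one_add_mul_le_pow (a := c * θ ^ 2) (by nlinarith [sq_nonneg θ, hc.le]) n
      calc 1 + (n:ℝ) * c * θ ^ 2 = 1 + (n:ℝ) * (c * θ ^ 2) := by ring
        _ ≤ (1 + c * θ ^ 2) ^ n := this
    have h6 : ((1 + c * θ ^ 2) ^ n)⁻¹ ≤ (1 + (n:ℝ) * c * θ ^ 2)⁻¹ :=
      inv_anti₀ (by positivity) h5
    calc g θ ^ n ≤ ((1 + c * θ ^ 2)⁻¹) ^ n := h3
      _ = ((1 + c * θ ^ 2) ^ n)⁻¹ := by rw [inv_pow]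
      _ ≤ (1 + (n:ℝ) * c * θ ^ 2)⁻¹ := h6
  -- the bounding function and its integral
  obtain ⟨a, ha_def⟩ : ∃ a : ℝ, a = Real.sqrt ((n:ℝ) * c) := ⟨_, rfl⟩
  have hnc : (0:ℝ) < (n:ℝ) * c := by positivity
  have ha : 0 < a := by rw [ha_def]; exact Real.sqrt_pos.2 hnc
  have ha2 : a ^ 2 = (n:ℝ) * c := by rw [ha_def]; exact Real.sq_sqrt hnc.le
  have hb_eq : ∀ θ : ℝ, (1 + (n:ℝ) * c * θ ^ 2)⁻¹ = (1 + (a * θ) ^ 2)⁻¹ := by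
    intro θ; rw [mul_pow, ha2]
  have hb_cont : Continuous fun θ : ℝ => (1 + (n:ℝ) * c * θ ^ 2)⁻¹ := by
    exact Continuous.inv₀ (continuous_const.add (continuous_const.mul (continuous_pow 2)))
      (fun x => by positivity)
  have hb_int : IntervalIntegrable (fun θ : ℝ => (1 + (n:ℝ) * c * θ ^ 2)⁻¹)
      volume (-π) π := hb_cont.intervalIntegrable _ _
  have hae : ∀ᵐ t ∂(volume.restrict (Set.uIoc (-π) π)),
      ‖∏ y ∈ η.support, (geomChar p q (t * (ε y : ℝ))) ^ (η y)‖
        ≤ (1 + (n:ℝ) * c * t ^ 2)⁻¹ := by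
    refine (ae_restrict_mem measurableSet_uIoc).mono fun t ht => ?_
    rw [Set.uIoc_of_le (by linarith : -π ≤ π)] at ht
    rw [hprod t]
    exact hpt t (abs_le.2 ⟨ht.1.le, ht.2⟩)
  have hIb : ‖∫ θ in (-π:ℝ)..π, ∏ y ∈ η.support, (geomChar p q (θ * (ε y : ℝ))) ^ (η y)‖
      ≤ |∫ θ in (-π:ℝ)..π, (1 + (n:ℝ) * c * θ ^ 2)⁻¹| :=
    intervalIntegral.norm_integral_le_abs_of_norm_le hae hb_int
  have hIval : ∫ θ in (-π:ℝ)..π, (1 + (n:ℝ) * c * θ ^ 2)⁻¹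
      = a⁻¹ * (Real.arctan (a * π) - Real.arctan (a * (-π))) := by
    have : (fun θ : ℝ => (1 + (n:ℝ) * c * θ ^ 2)⁻¹)
        = fun θ : ℝ => (fun x : ℝ => (1 + x ^ 2)⁻¹) (a * θ) := by
      funext θ; exact hb_eq θ
    rw [this, intervalIntegral.integral_comp_mul_left (fun x : ℝ => (1 + x ^ 2)⁻¹) ha.ne',
      integral_inv_one_add_sq]
    simp [smul_eq_mul]
  have hIbound : |∫ θ in (-π:ℝ)..π, (1 + (n:ℝ) * c * θ ^ 2)⁻¹| ≤ a⁻¹ * π := by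
    rw [hIval, abs_of_nonneg]
    · have h1 := Real.arctan_lt_pi_div_two (a * π)
      have h2 := Real.neg_pi_div_two_lt_arctan (a * (-π))
      have : Real.arctan (a * π) - Real.arctan (a * (-π)) ≤ π := by linarith
      exact mul_le_mul_of_nonneg_left this (inv_nonneg.2 ha.le)
    · have hmm : Real.arctan (a * (-π)) ≤ Real.arctan (a * π) :=
        Real.arctan_strictMono.monotone
          (mul_le_mul_of_nonneg_left (by linarith : -π ≤ π) ha.le)
      exact mul_nonneg (inv_nonneg.2 ha.le) (by linarith)
  have hsc : 0 < Real.sqrt c := Real.sqrt_pos.2 hc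
  have hsn : 0 < Real.sqrt (n:ℝ) := Real.sqrt_pos.2 hn0
  have ha_eq : a = Real.sqrt (n:ℝ) * Real.sqrt c := by
    rw [ha_def, Real.sqrt_mul hn0.le]
  have hlog : 1 ≤ Real.log n := by
    rw [Real.le_log_iff_exp_le hn0]
    calc Real.exp 1 ≤ 2.7182818286 := Real.exp_one_lt_d9.le
      _ ≤ (n:ℝ) := by norm_num; linarith
  have hslog : 1 ≤ Real.sqrt (Real.log n) := by
    have h := Real.sqrt_le_sqrt hlog
    rwa [Real.sqrt_one] at h
  calc ‖(1 / (2 * (π : ℂ))) *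
          ∫ θ in (-π : ℝ)..π, ∏ y ∈ η.support, (geomChar p q (θ * (ε y : ℝ))) ^ (η y)‖
      = ‖(1 / (2 * (π : ℂ)))‖ *
          ‖∫ θ in (-π : ℝ)..π, ∏ y ∈ η.support, (geomChar p q (θ * (ε y : ℝ))) ^ (η y)‖ :=
        norm_mul _ _
    _ ≤ (1 / (2 * π)) * (a⁻¹ * π) := by
        have hcoef : ‖(1 / (2 * (π:ℂ)))‖ = 1 / (2 * π) := by
          have he : (1 / (2 * (π:ℂ))) = (((1 / (2 * π) : ℝ)) : ℂ) := by
            push_cast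
            ring
          rw [he, Complex.norm_real, Real.norm_of_nonneg (by positivity)]
        rw [hcoef]
        exact mul_le_mul_of_nonneg_left (hIb.trans hIbound) (by positivity)
    _ = 1 / (2 * Real.sqrt c) * (1 / Real.sqrt (n:ℝ)) := by
        rw [ha_eq]; field_simp
    _ ≤ 1 / (2 * Real.sqrt c) * (Real.sqrt (Real.log n) / Real.sqrt (n:ℝ)) := by
        gcongr
    _ = 1 / (2 * Real.sqrt c) * Real.sqrt (Real.log n / n) := by
        rw [Real.sqrt_div (by linarith : (0:ℝ) ≤ Real.log n)]
end

section
/- If the sampled embedded walk (X_{σ_n})_{n∈N} is transient in the sense that sup_{x∈Z} ∑_n P(X_{σ_n} = x | F∨G) ≤ C < ∞, and Z is an independent geometric random variable of parameter p, then ∑_n P(∃x ≥ 1 : X_{σ_n} = x and Z ≥ x | F∨G) ≤ Cq/(1-q) < ∞, and hence the two-dimensional walk (M_n) is transient. -/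
open MeasureTheory ProbabilityTheory

/-- if the sampled embedded walk `(X_{σ_n})` (here `W n`) is transient in
the sense that `sup_x ∑_n P(W n = x) ≤ C`, and `Z` is an independent geometric random
variable with `P(Z ≥ x) = q^x`, then `∑_n P(∃ x ≥ 1, W n = x ∧ Z ≥ x) ≤ C q/(1-q) < ∞`
(whence the transience of the two-dimensional walk `(M_n)`). -/
theorem straddle_series_bound
    {Ω : Type*} [MeasurableSpace Ω] (μ : Measure Ω) [IsProbabilityMeasure μ]
    (p q : ℝ) (hp : 0 < p) (hp1 : p < 1) (hq : q = 1 - p)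
    (W : ℕ → Ω → ℤ) (Z : Ω → ℕ)
    (hWmeas : ∀ n, Measurable (W n)) (hZmeas : Measurable Z)
    (hZindep : ∀ n, IndepFun (W n) Z μ)
    (hZtail : ∀ x : ℕ, μ {ω | x ≤ Z ω} = ENNReal.ofReal (q ^ x))
    (C : ℝ) (hC : 0 ≤ C)
    (htrans : ∀ x : ℤ, (∑' n : ℕ, μ {ω | W n ω = x}) ≤ ENNReal.ofReal C) :
    (∑' n : ℕ, μ {ω | ∃ x : ℕ, 1 ≤ x ∧ W n ω = (x : ℤ) ∧ x ≤ Z ω})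
      ≤ ENNReal.ofReal (C * q / (1 - q)) := by
  have hq0 : 0 ≤ q := by linarith
  have hq1 : q < 1 := by linarith
  -- bound each term by a sum over x
  have hA : ∀ n x, μ {ω | W n ω = ((x + 1 : ℕ) : ℤ) ∧ (x + 1) ≤ Z ω}
      = μ {ω | W n ω = ((x + 1 : ℕ) : ℤ)} * ENNReal.ofReal (q ^ (x + 1)) := by
    intro n x
    have h := (hZindep n).measure_inter_preimage_eq_mul
      ({((x + 1 : ℕ) : ℤ)} : Set ℤ) (Set.Ici (x + 1))
      (measurableSet_singleton _) measurableSet_Ici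
    have e1 : W n ⁻¹' {((x + 1 : ℕ) : ℤ)} ∩ Z ⁻¹' Set.Ici (x + 1)
        = {ω | W n ω = ((x + 1 : ℕ) : ℤ) ∧ (x + 1) ≤ Z ω} := by
      ext ω; simp [Set.mem_preimage, and_comm]
    have e2 : Z ⁻¹' Set.Ici (x + 1) = {ω | (x + 1) ≤ Z ω} := rfl
    have e3 : W n ⁻¹' {((x + 1 : ℕ) : ℤ)} = {ω | W n ω = ((x + 1 : ℕ) : ℤ)} := rfl
    rw [e1, e2, e3, hZtail] at h
    exact h
  have hEn : ∀ n, μ {ω | ∃ x : ℕ, 1 ≤ x ∧ W n ω = (x : ℤ) ∧ x ≤ Z ω}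
      ≤ ∑' x : ℕ, μ {ω | W n ω = ((x + 1 : ℕ) : ℤ)} * ENNReal.ofReal (q ^ (x + 1)) := by
    intro n
    have hsub : {ω | ∃ x : ℕ, 1 ≤ x ∧ W n ω = (x : ℤ) ∧ x ≤ Z ω}
        ⊆ ⋃ x : ℕ, {ω | W n ω = ((x + 1 : ℕ) : ℤ) ∧ (x + 1) ≤ Z ω} := by
      rintro ω ⟨x, hx1, hWx, hZx⟩
      refine Set.mem_iUnion.2 ⟨x - 1, ?_⟩
      have : x - 1 + 1 = x := Nat.succ_pred_eq_of_pos hx1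
      rw [this] at *
      simp only [Set.mem_setOf_eq, this]
      exact ⟨hWx, hZx⟩
    calc μ {ω | ∃ x : ℕ, 1 ≤ x ∧ W n ω = (x : ℤ) ∧ x ≤ Z ω}
        ≤ μ (⋃ x : ℕ, {ω | W n ω = ((x + 1 : ℕ) : ℤ) ∧ (x + 1) ≤ Z ω}) := measure_mono hsub
      _ ≤ ∑' x : ℕ, μ {ω | W n ω = ((x + 1 : ℕ) : ℤ) ∧ (x + 1) ≤ Z ω} := measure_iUnion_le _
      _ = ∑' x : ℕ, μ {ω | W n ω = ((x + 1 : ℕ) : ℤ)} * ENNReal.ofReal (q ^ (x + 1)) := by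
          exact tsum_congr fun x => hA n x
  calc (∑' n : ℕ, μ {ω | ∃ x : ℕ, 1 ≤ x ∧ W n ω = (x : ℤ) ∧ x ≤ Z ω})
      ≤ ∑' n : ℕ, ∑' x : ℕ, μ {ω | W n ω = ((x + 1 : ℕ) : ℤ)} * ENNReal.ofReal (q ^ (x + 1)) :=
        ENNReal.tsum_le_tsum hEn
    _ = ∑' x : ℕ, ∑' n : ℕ, μ {ω | W n ω = ((x + 1 : ℕ) : ℤ)} * ENNReal.ofReal (q ^ (x + 1)) :=
        ENNReal.tsum_comm
    _ = ∑' x : ℕ, (∑' n : ℕ, μ {ω | W n ω = ((x + 1 : ℕ) : ℤ)}) * ENNReal.ofReal (q ^ (x + 1)) := by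
        exact tsum_congr fun x => (ENNReal.tsum_mul_right).symm ▸ rfl
    _ ≤ ∑' x : ℕ, ENNReal.ofReal C * ENNReal.ofReal (q ^ (x + 1)) := by
        refine ENNReal.tsum_le_tsum fun x => ?_
        exact mul_le_mul_left (htrans _) _
    _ = ∑' x : ℕ, ENNReal.ofReal C * ENNReal.ofReal q * (ENNReal.ofReal q) ^ x := by
        refine tsum_congr fun x => ?_
        rw [pow_succ, ENNReal.ofReal_mul (pow_nonneg hq0 x), ENNReal.ofReal_pow hq0]
        ring
    _ = ENNReal.ofReal C * ENNReal.ofReal q * ∑' x : ℕ, (ENNReal.ofReal q) ^ x :=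
        ENNReal.tsum_mul_left
    _ = ENNReal.ofReal C * ENNReal.ofReal q * (1 - ENNReal.ofReal q)⁻¹ := by
        rw [ENNReal.tsum_geometric]
    _ = ENNReal.ofReal (C * q / (1 - q)) := by
        have h1q : (1 : ENNReal) - ENNReal.ofReal q = ENNReal.ofReal (1 - q) := by
          rw [ENNReal.ofReal_sub 1 hq0, ENNReal.ofReal_one]
        rw [h1q, ENNReal.ofReal_div_of_pos (by linarith : (0:ℝ) < 1 - q),
          ENNReal.ofReal_mul hC, div_eq_mul_inv]
end
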